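/- arXiv:1506.07675 — 15 statements merged into one kernel-verified Lean document; each statement's English description precedes it below -/
import Mathlib

section
/- Let M be a binary matrix admitting a conflict-free row split M'. Then for every row r_i of M, with R'_i the set of split rows of r_i in M', we have |R'_i| ≥ χ(G_{M,r_i}), the chromatic number of the conflict graph of (M, r_i). -/
/-! Common definitions: binary matrices, conflicts, row splits, conflict graphs,
containment, transitive orientations. -/

namespace MPP

variable {α β : Type*}

/-- Columns `i` and `j` of the binary matrix `M` are in conflict. -/
def InConflict (M : α → β → Bool) (i j : β) : Prop :=
  ∃ r r' r'' : α, M r i = true ∧ M r j = true ∧ M r' i = false ∧ M r' j = true ∧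
    M r'' i = true ∧ M r'' j = false

theorem InConflict.symm {M : α → β → Bool} {i j : β} (h : InConflict M i j) :
    InConflict M j i := by
  obtain ⟨r, r', r'', h1, h2, h3, h4, h5, h6⟩ := h
  exact ⟨r, r'', r', h2, h1, h6, h5, h4, h3⟩

theorem InConflict.ne {M : α → β → Bool} {i j : β} (h : InConflict M i j) : i ≠ j := by
  rintro rfl
  obtain ⟨r, r', r'', _, _, h3, h4, _, _⟩ := h
  rw [h3] at h4
  exact Bool.false_ne_true h4

/-- A binary matrix is conflict-free if no two of its columns are in conflict. -/
def ConflictFree (M : α → β → Bool) : Prop := ∀ i j : β, ¬ InConflict M i j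

/-- Column `i` of `M` is contained in column `j`. -/
def Contained (M : α → β → Bool) (i j : β) : Prop :=
  ∀ k : α, M k i = true → M k j = true

instance {α β : Type*} [Fintype α] (M : α → β → Bool) (i j : β) :
    Decidable (Contained M i j) :=
  inferInstanceAs (Decidable (∀ k : α, M k i = true → M k j = true))

/-- The conflict graph of a binary matrix `M`: vertices are all columns,
adjacent iff in conflict. -/
def conflictGraphAll (M : α → β → Bool) : SimpleGraph β where
  Adj i j := InConflict M i j
  symm := ⟨fun _ _ h => h.symm⟩
  loopless := ⟨fun _ h => h.ne rfl⟩

/-- The conflict graph `G_{M,r}`: vertices are the columns with a `1` in row `r`,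
adjacent iff the corresponding columns of `M` are in conflict. -/
def conflictGraph (M : α → β → Bool) (r : α) : SimpleGraph {j : β // M r j = true} where
  Adj a b := InConflict M a.1 b.1
  symm := ⟨fun _ _ h => h.symm⟩
  loopless := ⟨fun _ h => h.ne rfl⟩

/-- `M'` is a row split of `M` via the assignment `f` sending each row of `M'` to the row
of `M` it splits: each row `i` of `M` is the bitwise OR of the rows of `M'` mapped to `i`. -/
def IsRowSplit {α' : Type*} (M : α → β → Bool) (M' : α' → β → Bool) (f : α' → α) : Prop :=
  ∀ (i : α) (j : β), M i j = true ↔ ∃ k : α', f k = i ∧ M' k j = true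

/-- `γ̄(M)`: the minimum number of rows of a conflict-free row split of `M`. -/
noncomputable def gammaBar (M : α → β → Bool) : ℕ :=
  sInf {k : ℕ | ∃ (M' : Fin k → β → Bool) (f : Fin k → α),
    IsRowSplit M M' f ∧ ConflictFree M'}

/-- `η̄(M)`: the minimum number of pairwise distinct rows of a conflict-free row split of `M`. -/
noncomputable def etaBar (M : α → β → Bool) : ℕ :=
  sInf {d : ℕ | ∃ (k : ℕ) (M' : Fin k → β → Bool) (f : Fin k → α),
    IsRowSplit M M' f ∧ ConflictFree M' ∧ Nat.card (Set.range M') = d}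

/-- `o` is a transitive orientation of the graph `G`: it assigns to each edge `{u,v}`
exactly one of `(u,v)`, `(v,u)`, and is transitive. -/
def IsTransitiveOrientation {V : Type*} (G : SimpleGraph V) (o : V → V → Prop) : Prop :=
  (∀ u v, o u v → G.Adj u v) ∧
  (∀ u v, G.Adj u v → (o u v ↔ ¬ o v u)) ∧
  (∀ u v w, o u v → o v w → o u w)

/-- A graph is transitively orientable if it admits a transitive orientation. -/
def TransitivelyOrientable {V : Type*} (G : SimpleGraph V) : Prop :=
  ∃ o : V → V → Prop, IsTransitiveOrientation G o

/-- The undirected containment graph `H_M`: vertices are the columns of `M`, two distinct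
columns adjacent iff one is contained in the other. -/
def containmentGraph (M : α → β → Bool) : SimpleGraph β where
  Adj i j := i ≠ j ∧ (Contained M i j ∨ Contained M j i)
  symm := ⟨fun _ _ h => ⟨h.1.symm, h.2.symm⟩⟩
  loopless := ⟨fun _ h => h.1 rfl⟩

/-- In the directed containment graph `H⃗_{M,r}` (on the columns with a `1` in row `r`,
with an arc from `c_i` to `c_j` iff `i ≠ j` and `c_i` is contained in `c_j`),
the vertex `j` is a source, i.e., has no incoming arc. -/
def IsSourceCol (M : α → β → Bool) (r : α) (j : {c : β // M r c = true}) : Prop :=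
  ∀ i : {c : β // M r c = true}, i ≠ j → ¬ Contained M i.1 j.1

/-- `σ(M,r)`: the number of sources of the directed containment graph `H⃗_{M,r}`. -/
noncomputable def sigmaMr (M : α → β → Bool) (r : α) : ℕ :=
  Nat.card {j : {c : β // M r c = true} // IsSourceCol M r j}

end MPP

namespace MPP

/-- Lemma 1: if `M'` is a conflict-free row split of `M`, then for every row `i` of `M`,
the number of split rows of row `i` is at least the chromatic number of `G_{M,i}`. -/
theorem stmt_0 {m n m' : ℕ} (M : Fin m → Fin n → Bool) (M' : Fin m' → Fin n → Bool)
    (f : Fin m' → Fin m) (hsplit : IsRowSplit M M' f) (hcf : ConflictFree M') (i : Fin m) :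
    (conflictGraph M i).chromaticNumber ≤
      ((Finset.univ.filter fun k : Fin m' => f k = i).card : ℕ∞) := by
  classical
  have hcard : (Finset.univ.filter fun k : Fin m' => f k = i).card
      = Fintype.card {k : Fin m' // f k = i} := (Fintype.card_subtype _).symm
  rw [hcard]
  -- build a coloring of the conflict graph by split rows of row i
  have hcol : ∀ a : {j : Fin n // M i j = true},
      ∃ k : {k : Fin m' // f k = i}, M' k.1 a.1 = true := by
    rintro ⟨a, ha⟩
    obtain ⟨k, hk, hk'⟩ := (hsplit i a).1 ha
    exact ⟨⟨k, hk⟩, hk'⟩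
  choose c hc using hcol
  refine SimpleGraph.Colorable.chromaticNumber_le
    (SimpleGraph.Coloring.colorable (SimpleGraph.Coloring.mk c ?_))
  rintro a b (hadj : InConflict M a.1 b.1) hcab
  obtain ⟨r, r', r'', h1, h2, h3, h4, h5, h6⟩ := hadj
  -- split rows witnessing the conflict in M'
  obtain ⟨k', hk', hk'b⟩ := (hsplit r' b.1).1 h4
  obtain ⟨k'', hk'', hk''a⟩ := (hsplit r'' a.1).1 h5
  have hk'a : M' k' a.1 = false := by
    by_contra h
    exact absurd ((hsplit r' a.1).2 ⟨k', hk', by simpa using h⟩) (by simp [h3])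
  have hk''b : M' k'' b.1 = false := by
    by_contra h
    exact absurd ((hsplit r'' b.1).2 ⟨k'', hk'', by simpa using h⟩) (by simp [h6])
  exact hcf a.1 b.1 ⟨(c a).1, k', k'', hc a, hcab ▸ hc b, hk'a, hk'b, hk''a, hk''b⟩

end MPP
end

section
/- For every binary matrix M, γ̄(M) ≥ Σ_r χ(G_{M,r}), where the sum runs over all rows r of M. -/
namespace MPP

/-- From a conflict-free row split, each row's conflict graph is colorable by the fiber. -/
theorem colorable_of_rowSplit {m n k : ℕ} (M : Fin m → Fin n → Bool)
    (M' : Fin k → Fin n → Bool) (f : Fin k → Fin m)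
    (hs : IsRowSplit M M' f) (hc : ConflictFree M') (r : Fin m) :
    (conflictGraph M r).Colorable (Fintype.card {k' : Fin k // f k' = r}) := by
  have hchoose : ∀ j : {c : Fin n // M r c = true},
      ∃ k' : Fin k, f k' = r ∧ M' k' j.1 = true := fun j => (hs r j.1).mp j.2
  choose g hg1 hg2 using hchoose
  refine (SimpleGraph.Coloring.mk
    (fun j => (⟨g j, hg1 j⟩ : {k' : Fin k // f k' = r})) ?_).colorable
  intro a b hab heq
  obtain ⟨s, s', s'', h1, h2, h3, h4, h5, h6⟩ := hab
  obtain ⟨t', ht'f, ht'⟩ := (hs s' b.1).mp h4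
  obtain ⟨t'', ht''f, ht''⟩ := (hs s'' a.1).mp h5
  have ht'a : M' t' a.1 = false := by
    by_contra h
    exact absurd ((hs s' a.1).mpr ⟨t', ht'f, by simpa using h⟩) (by simp [h3])
  have ht''b : M' t'' b.1 = false := by
    by_contra h
    exact absurd ((hs s'' b.1).mpr ⟨t'', ht''f, by simpa using h⟩) (by simp [h6])
  have hgab : g a = g b := congrArg Subtype.val heq
  exact hc a.1 b.1 ⟨g a, t', t'', hg2 a, hgab ▸ hg2 b, ht'a, ht', ht'', ht''b⟩

/-- The set defining `gammaBar` is nonempty. -/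
theorem gammaBar_set_nonempty {m n : ℕ} (M : Fin m → Fin n → Bool) :
    {k : ℕ | ∃ (M' : Fin k → Fin n → Bool) (f : Fin k → Fin m),
      IsRowSplit M M' f ∧ ConflictFree M'}.Nonempty := by
  classical
  refine ⟨m * n, fun i j =>
    M (finProdFinEquiv.symm i).1 (finProdFinEquiv.symm i).2 &&
      decide ((finProdFinEquiv.symm i).2 = j),
    fun i => (finProdFinEquiv.symm i).1, ?_, ?_⟩
  · intro i j
    constructor
    · intro h
      refine ⟨finProdFinEquiv (i, j), ?_, ?_⟩ <;> simp [h]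
    · rintro ⟨k', hk', h⟩
      simp only [Bool.and_eq_true, decide_eq_true_eq] at h
      rw [← hk', ← h.2]
      exact h.1
  · intro i j hconf
    have hne := hconf.ne
    obtain ⟨s, -, -, h1, h2, -, -, -, -⟩ := hconf
    simp only [Bool.and_eq_true, decide_eq_true_eq] at h1 h2
    exact hne (h1.2.symm.trans h2.2)

/-- Corollary 1: `γ̄(M) ≥ Σ_r χ(G_{M,r})`. -/
theorem stmt_1 {m n : ℕ} (M : Fin m → Fin n → Bool) :
    ∑ r : Fin m, (conflictGraph M r).chromaticNumber ≤ (gammaBar M : ℕ∞) := by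
  classical
  obtain ⟨M', f, hs, hc⟩ := Nat.sInf_mem (gammaBar_set_nonempty M)
  set k := gammaBar M with hk
  calc ∑ r : Fin m, (conflictGraph M r).chromaticNumber
      ≤ ∑ r : Fin m, ((Fintype.card {k' : Fin k // f k' = r} : ℕ) : ℕ∞) :=
        Finset.sum_le_sum fun r _ => by
          exact (colorable_of_rowSplit M M' f hs hc r).chromaticNumber_le.trans_eq
            (congrArg (fun x : ℕ => (x : ℕ∞)) (Fintype.card_congr' rfl))
    _ = ((∑ r : Fin m, Fintype.card {k' : Fin k // f k' = r} : ℕ) : ℕ∞) := by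
        rw [Nat.cast_sum]
    _ = (k : ℕ∞) := by
        congr 1
        calc ∑ r : Fin m, Fintype.card {k' : Fin k // f k' = r}
            = Fintype.card ((r : Fin m) × {k' : Fin k // f k' = r}) :=
              Fintype.card_sigma.symm
          _ = Fintype.card (Fin k) := Fintype.card_congr (Equiv.sigmaFiberEquiv f)
          _ = k := Fintype.card_fin k

end MPP
end

section
/- For every binary matrix M and every row r of M, the complement of the conflict graph G_{M,r} is transitively orientable. -/
namespace MPP

/-- For every binary matrix `M` and row `r`, the complement of the conflict graph
`G_{M,r}` is transitively orientable. -/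
theorem stmt_3 {m n : ℕ} (M : Fin m → Fin n → Bool) (r : Fin m) :
    TransitivelyOrientable (conflictGraph M r)ᶜ := by
  classical
  -- key fact: non-conflicting columns sharing row r are comparable by containment
  have key : ∀ a b : {c : Fin n // M r c = true}, a ≠ b → ¬ InConflict M a.1 b.1 →
      Contained M a.1 b.1 ∨ Contained M b.1 a.1 := by
    intro a b _ hnc
    by_contra h
    push_neg at h
    obtain ⟨h1, h2⟩ := h
    simp only [Contained, not_forall] at h1 h2
    obtain ⟨r'', ha1, hb0⟩ := h1
    obtain ⟨r', hb1, ha0⟩ := h2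
    exact hnc ⟨r, r', r'', a.2, b.2, Bool.not_eq_true _ ▸ ha0, hb1, ha1,
      Bool.not_eq_true _ ▸ hb0⟩
  refine ⟨fun a b => ¬ InConflict M a.1 b.1 ∧
      ((Contained M a.1 b.1 ∧ ¬ Contained M b.1 a.1) ∨
       (Contained M a.1 b.1 ∧ Contained M b.1 a.1 ∧ a.1 < b.1)), ?_, ?_, ?_⟩
  · rintro a b ⟨hnc, h⟩
    have hne : a ≠ b := by
      rintro rfl
      rcases h with ⟨_, hc⟩ | ⟨_, _, hc⟩
      · exact hc (fun k h => h)
      · exact lt_irrefl _ hc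
    exact ⟨hne, hnc⟩
  · rintro a b ⟨hne, hnc⟩
    have hne' : a ≠ b := hne
    have hne'' : a.1 ≠ b.1 := fun h => hne (Subtype.ext h)
    constructor
    · rintro ⟨_, h⟩ ⟨_, h'⟩
      rcases h with ⟨hab, hnba⟩ | ⟨hab, hba, hlt⟩
      · rcases h' with ⟨hba, _⟩ | ⟨hba, _, _⟩ <;> exact hnba hba
      · rcases h' with ⟨_, hnab⟩ | ⟨_, _, hlt'⟩
        · exact hnab hab
        · exact lt_asymm hlt hlt'
    · intro h
      rcases key a b hne' hnc with hab | hba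
      · by_cases hba : Contained M b.1 a.1
        · rcases lt_or_gt_of_ne hne'' with hlt | hgt
          · exact ⟨hnc, Or.inr ⟨hab, hba, hlt⟩⟩
          · exact absurd ⟨fun h => hnc h.symm, Or.inr ⟨hba, hab, hgt⟩⟩ h
        · exact ⟨hnc, Or.inl ⟨hab, hba⟩⟩
      · by_cases hab : Contained M a.1 b.1
        · rcases lt_or_gt_of_ne hne'' with hlt | hgt
          · exact ⟨hnc, Or.inr ⟨hab, hba, hlt⟩⟩
          · exact absurd ⟨fun h => hnc h.symm, Or.inr ⟨hba, hab, hgt⟩⟩ h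
        · exact absurd ⟨fun h => hnc h.symm, Or.inl ⟨hba, hab⟩⟩ h
  · rintro a b c ⟨hncab, hab⟩ ⟨hncbc, hbc⟩
    have hab' : Contained M a.1 b.1 := by rcases hab with ⟨h, _⟩ | ⟨h, _⟩ <;> exact h
    have hbc' : Contained M b.1 c.1 := by rcases hbc with ⟨h, _⟩ | ⟨h, _⟩ <;> exact h
    have hac : Contained M a.1 c.1 := fun k h => hbc' k (hab' k h)
    have hncac : ¬ InConflict M a.1 c.1 := by
      rintro ⟨r1, r2, r3, -, -, -, -, ha1, hc0⟩
      rw [hbc' r3 (hab' r3 ha1)] at hc0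
      simp at hc0
    refine ⟨hncac, ?_⟩
    by_cases hca : Contained M c.1 a.1
    · -- all three supports equal, use index tie-breaks
      have hcb : Contained M c.1 b.1 := fun k h => hab' k (hca k h)
      have hba : Contained M b.1 a.1 := fun k h => hca k (hbc' k h)
      have h1 : a.1 < b.1 := by
        rcases hab with ⟨_, hn⟩ | ⟨_, _, h⟩
        · exact absurd hba hn
        · exact h
      have h2 : b.1 < c.1 := by
        rcases hbc with ⟨_, hn⟩ | ⟨_, _, h⟩
        · exact absurd hcb hn
        · exact h
      exact Or.inr ⟨hac, hca, h1.trans h2⟩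
    · exact Or.inl ⟨hac, hca⟩

end MPP
end

section
/- For every finite simple graph G whose complement is transitively orientable, there exist a binary matrix M and a row r of M such that G is isomorphic to the conflict graph G_{M,r}; moreover M can be taken to have 2|E(G)|+1 rows and |V(G)| columns, with r the all-ones row. -/
namespace MPP

/-- If the complement of a finite simple graph `G` is transitively orientable, then `G` is
isomorphic to the conflict graph `G_{M,r}` for some binary matrix `M` with `2|E(G)|+1` rows
and `|V(G)|` columns, where `r` is an all-ones row of `M`. -/
theorem stmt_4 {V : Type*} [Fintype V] [DecidableEq V] (G : SimpleGraph V)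
    [DecidableRel G.Adj] (h : TransitivelyOrientable Gᶜ) :
    ∃ (M : Fin (2 * G.edgeFinset.card + 1) → Fin (Fintype.card V) → Bool)
      (r : Fin (2 * G.edgeFinset.card + 1)),
      (∀ j, M r j = true) ∧ Nonempty (G ≃g conflictGraph M r) := by
  classical
  obtain ⟨o, ho1, ho2, ho3⟩ := h
  have hone : ∀ u v, o u v → ¬ G.Adj u v ∧ u ≠ v := by
    intro u v huv
    have := ho1 u v huv
    rw [SimpleGraph.compl_adj] at this
    exact ⟨this.2, this.1⟩
  set N : (G.Dart ⊕ Unit) → V → Bool := fun i c =>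
    match i with
    | Sum.inr _ => true
    | Sum.inl d => if c = d.snd then false else decide (c = d.fst ∨ o d.fst c) with hN
  have hcont : ∀ u v, o u v → ∀ i, N i u = true → N i v = true := by
    intro u v huv i hu
    match i with
    | Sum.inr _ => simp [hN]
    | Sum.inl d =>
      simp only [hN] at hu ⊢
      rw [if_neg, decide_eq_true_iff] at hu
      swap
      · intro hu'
        rw [if_pos hu'] at hu
        exact Bool.false_ne_true hu
      have hdv : o d.fst v := by
        rcases hu with rfl | hu
        · exact huv
        · exact ho3 _ _ _ hu huv
      have hvsnd : v ≠ d.snd := by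
        rintro rfl
        exact (hone _ _ hdv).1 d.adj
      rw [if_neg hvsnd, decide_eq_true_iff]
      exact Or.inr hdv
  have hconf : ∀ u v, InConflict N u v ↔ G.Adj u v := by
    intro u v
    constructor
    · intro hc
      have hne : u ≠ v := hc.ne
      by_contra hadj
      have hco : (Gᶜ).Adj u v := ⟨hne, hadj⟩
      obtain ⟨i, i', i'', h1, h2, h3, h4, h5, h6⟩ := hc
      by_cases huv : o u v
      · rw [hcont u v huv i'' h5] at h6
        exact Bool.false_ne_true h6.symm
      · have hvu : o v u := by
          have := ho2 v u hco.symm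
          rw [this]
          exact huv
        rw [hcont v u hvu i' h4] at h3
        exact Bool.false_ne_true h3.symm
    · intro hadj
      have hne : u ≠ v := hadj.ne
      refine ⟨Sum.inr (), Sum.inl ⟨(v, u), hadj.symm⟩, Sum.inl ⟨(u, v), hadj⟩, ?_, ?_, ?_, ?_, ?_, ?_⟩ <;>
        simp [hN, hne, hne.symm, hadj]
  have hcard : 2 * G.edgeFinset.card + 1 = Fintype.card (G.Dart ⊕ Unit) := by
    simp [SimpleGraph.dart_card_eq_twice_card_edges]
  let ρ : Fin (2 * G.edgeFinset.card + 1) ≃ (G.Dart ⊕ Unit) :=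
    Fintype.equivOfCardEq (by simpa using hcard)
  let ε : Fin (Fintype.card V) ≃ V := (Fintype.equivFin V).symm
  set M : Fin (2 * G.edgeFinset.card + 1) → Fin (Fintype.card V) → Bool :=
    fun i j => N (ρ i) (ε j) with hM
  have hall : ∀ j, M (ρ.symm (Sum.inr ())) j = true := by
    intro j
    simp [hM, hN]
  refine ⟨M, ρ.symm (Sum.inr ()), hall, ?_⟩
  have hMN : ∀ i j, InConflict M i j ↔ InConflict N (ε i) (ε j) := by
    intro i j
    constructor
    · rintro ⟨r, r', r'', h1, h2, h3, h4, h5, h6⟩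
      exact ⟨ρ r, ρ r', ρ r'', h1, h2, h3, h4, h5, h6⟩
    · rintro ⟨r, r', r'', h1, h2, h3, h4, h5, h6⟩
      refine ⟨ρ.symm r, ρ.symm r', ρ.symm r'', ?_, ?_, ?_, ?_, ?_, ?_⟩ <;>
        simpa [hM] using ‹_›
  refine ⟨{ toEquiv := ε.symm.trans (Equiv.subtypeUnivEquiv hall).symm, map_rel_iff' := ?_ }⟩
  intro u v
  show InConflict M (ε.symm u) (ε.symm v) ↔ G.Adj u v
  rw [hMN, Equiv.apply_symm_apply, Equiv.apply_symm_apply, hconf]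

end MPP
end

section
/- Let M be a binary matrix with pairwise distinct columns and let r be a row of M. Then any two distinct sources of the directed containment graph H⃗_{M,r} correspond to columns of M that are in conflict; consequently the sources of H⃗_{M,r} form a clique in the conflict graph G_{M,r}, and σ(M,r) ≤ ω(G_{M,r}), the clique number of G_{M,r}. -/
namespace MPP

/-- If `M` has pairwise distinct columns, then any two distinct sources of `H⃗_{M,r}` are in
conflict; hence the sources form a clique in `G_{M,r}` and `σ(M,r) ≤ ω(G_{M,r})`. -/
theorem stmt_7 {m n : ℕ} (M : Fin m → Fin n → Bool)
    (hinj : Function.Injective fun j : Fin n => fun k : Fin m => M k j) (r : Fin m) :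
    (∀ a b : {c : Fin n // M r c = true}, IsSourceCol M r a → IsSourceCol M r b → a ≠ b →
      InConflict M a.1 b.1) ∧
    (conflictGraph M r).IsClique {a : {c : Fin n // M r c = true} | IsSourceCol M r a} ∧
    sigmaMr M r ≤ (conflictGraph M r).cliqueNum := by
  have key : ∀ a b : {c : Fin n // M r c = true}, IsSourceCol M r a → IsSourceCol M r b →
      a ≠ b → InConflict M a.1 b.1 := by
    intro a b ha hb hne
    have h1 : ¬ Contained M a.1 b.1 := hb a hne
    have h2 : ¬ Contained M b.1 a.1 := ha b hne.symm
    simp only [Contained, not_forall] at h1 h2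
    obtain ⟨r'', ha2, hb2⟩ := h1
    obtain ⟨r', hb1, ha1⟩ := h2
    exact ⟨r, r', r'', a.2, b.2, Bool.eq_false_iff.2 ha1, hb1, ha2, Bool.eq_false_iff.2 hb2⟩
  have hclique : (conflictGraph M r).IsClique {a : {c : Fin n // M r c = true} | IsSourceCol M r a} := by
    intro a ha b hb hne
    exact key a b ha hb hne
  refine ⟨key, hclique, ?_⟩
  classical
  have hc : (conflictGraph M r).IsClique
      ({a : {c : Fin n // M r c = true} | IsSourceCol M r a}.toFinset : Set _) := by
    rwa [Set.coe_toFinset]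
  have := hc.card_le_cliqueNum
  calc sigmaMr M r = {a : {c : Fin n // M r c = true} | IsSourceCol M r a}.toFinset.card := by
        rw [sigmaMr, Nat.card_eq_fintype_card]
        rw [Set.toFinset_card]
        rfl
    _ ≤ (conflictGraph M r).cliqueNum := this

end MPP
end

section
/- Let M be an m×n binary matrix with no all-zero row, with pairwise distinct columns, and such that no column of M is contained in both columns of a pair of conflicting columns. Then γ̄(M) = Σ_r χ(G_{M,r}) = Σ_r σ(M,r), where both sums run over all rows r of M. -/
namespace MPP



variable {α β : Type*}

theorem contained_trans {M : α → β → Bool} {a b c : β} (h1 : Contained M a b)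
    (h2 : Contained M b c) : Contained M a c := fun k hk => h2 k (h1 k hk)

theorem not_contained_of_inConflict {M : α → β → Bool} {i j : β} (h : InConflict M i j) :
    ¬ Contained M i j := by
  obtain ⟨r, r', r'', _, _, _, _, h5, h6⟩ := h
  intro hc
  rw [hc r'' h5] at h6
  exact Bool.noConfusion h6

theorem contained_or {M : α → β → Bool} {i j : β} {k : α} (h : ¬ InConflict M i j)
    (h1 : M k i = true) (h2 : M k j = true) : Contained M i j ∨ Contained M j i := by
  by_contra hcon
  push_neg at hcon
  obtain ⟨hc1, hc2⟩ := hcon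
  simp only [Contained, not_forall, Bool.not_eq_true] at hc1 hc2
  obtain ⟨p, hp1, hp2⟩ := hc1
  obtain ⟨q, hq1, hq2⟩ := hc2
  exact h ⟨k, q, p, h1, h2, hq2, hq1, hp1, hp2⟩

theorem rowsplit_contained {α' : Type*} {M : α → β → Bool} {M' : α' → β → Bool} {f : α' → α}
    (h : IsRowSplit M M' f) {c d : β} (hcd : Contained M' c d) : Contained M c d := by
  intro k hk
  obtain ⟨k', hk'1, hk'2⟩ := (h k c).mp hk
  exact (h k d).mpr ⟨k', hk'1, hcd k' hk'2⟩

theorem sources_conflict {m n : ℕ} {M : Fin m → Fin n → Bool} {r : Fin m}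
    {a b : {c : Fin n // M r c = true}} (ha : IsSourceCol M r a) (hb : IsSourceCol M r b)
    (hne : a ≠ b) : InConflict M a.1 b.1 := by
  have h1 : ¬ Contained M a.1 b.1 := hb a hne
  have h2 : ¬ Contained M b.1 a.1 := ha b hne.symm
  simp only [Contained, not_forall, Bool.not_eq_true] at h1 h2
  obtain ⟨p, hp1, hp2⟩ := h1
  obtain ⟨q, hq1, hq2⟩ := h2
  exact ⟨r, q, p, a.2, b.2, hq2, hq1, hp1, hp2⟩

theorem exists_source_below {m n : ℕ} {M : Fin m → Fin n → Bool}
    (hinj : Function.Injective fun j : Fin n => fun k : Fin m => M k j) (r : Fin m) :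
    ∀ (N : ℕ) (x : {c : Fin n // M r c = true}),
      (Finset.univ.filter fun k => M k x.1 = true).card ≤ N →
      ∃ a : {c : Fin n // M r c = true}, IsSourceCol M r a ∧ Contained M a.1 x.1 := by
  intro N
  induction N with
  | zero =>
    intro x hx
    exfalso
    have hmem : r ∈ Finset.univ.filter fun k => M k x.1 = true := by
      simp [x.2]
    have := Finset.card_pos.mpr ⟨r, hmem⟩
    omega
  | succ N ih =>
    intro x hx
    by_cases hs : IsSourceCol M r x
    · exact ⟨x, hs, fun k hk => hk⟩
    · rw [IsSourceCol] at hs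
      push_neg at hs
      obtain ⟨i, hne, hcont⟩ := hs
      have hsub : (Finset.univ.filter fun k => M k i.1 = true) ⊆
          (Finset.univ.filter fun k => M k x.1 = true) := by
        intro k hk
        simp only [Finset.mem_filter, Finset.mem_univ, true_and] at hk ⊢
        exact hcont k hk
      have hssne : (Finset.univ.filter fun k => M k i.1 = true) ≠
          (Finset.univ.filter fun k => M k x.1 = true) := by
        intro he
        apply hne
        apply Subtype.ext
        apply hinj
        funext k
        have hmem := Finset.ext_iff.mp he k
        simp only [Finset.mem_filter, Finset.mem_univ, true_and] at hmem
        exact Bool.eq_iff_iff.mpr hmem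
      have hlt := Finset.card_lt_card (HasSubset.Subset.ssubset_of_ne hsub hssne)
      obtain ⟨a, ha1, ha2⟩ := ih i (by omega)
      exact ⟨a, ha1, contained_trans ha2 hcont⟩

theorem sum_sigma_le {m n k : ℕ} {M : Fin m → Fin n → Bool} {M' : Fin k → Fin n → Bool}
    {f : Fin k → Fin m} (hsplit : IsRowSplit M M' f) (hcf : ConflictFree M') :
    ∑ r : Fin m, sigmaMr M r ≤ k := by
  classical
  have hchoice : ∀ (p : Σ r : Fin m, {a : {c : Fin n // M r c = true} // IsSourceCol M r a}),
      ∃ k' : Fin k, f k' = p.1 ∧ M' k' p.2.1.1 = true :=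
    fun p => (hsplit p.1 p.2.1.1).mp p.2.1.2
  choose φ hφ1 hφ2 using hchoice
  have hinjφ : Function.Injective φ := by
    rintro ⟨r, a⟩ ⟨r', b⟩ hpq
    have h1 : f (φ ⟨r, a⟩) = r := hφ1 ⟨r, a⟩
    have h2 : f (φ ⟨r', b⟩) = r' := hφ1 ⟨r', b⟩
    have hr : r = r' := by rw [← h1, ← h2, hpq]
    subst hr
    have hab : a = b := by
      by_contra hab
      have hne : a.1 ≠ b.1 := fun h => hab (Subtype.ext h)
      have hconf : InConflict M a.1.1 b.1.1 := sources_conflict a.2 b.2 hne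
      have h1 : M' (φ ⟨r, a⟩) a.1.1 = true := hφ2 _
      have h2 : M' (φ ⟨r, a⟩) b.1.1 = true := by rw [hpq]; exact hφ2 _
      rcases contained_or (hcf a.1.1 b.1.1) h1 h2 with hc | hc
      · exact not_contained_of_inConflict hconf (rowsplit_contained hsplit hc)
      · exact not_contained_of_inConflict hconf.symm (rowsplit_contained hsplit hc)
    rw [hab]
  have hcard : ∑ r : Fin m, sigmaMr M r =
      Nat.card (Σ r : Fin m, {a : {c : Fin n // M r c = true} // IsSourceCol M r a}) := by
    rw [Nat.card_eq_fintype_card, Fintype.card_sigma]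
    exact Finset.sum_congr rfl fun r _ => by rw [sigmaMr, Nat.card_eq_fintype_card]
  rw [hcard]
  calc Nat.card (Σ r : Fin m, {a : {c : Fin n // M r c = true} // IsSourceCol M r a})
      ≤ Nat.card (Fin k) := Nat.card_le_card_of_injective φ hinjφ
    _ = k := by simp

/-- Theorem 5: if `M` has no all-zero row, has pairwise distinct columns, and no column of `M`
is contained in both columns of a pair of conflicting columns, then
`γ̄(M) = Σ_r χ(G_{M,r}) = Σ_r σ(M,r)`. -/
theorem stmt_8 {m n : ℕ} (M : Fin m → Fin n → Bool)
    (hrow : ∀ r : Fin m, ∃ j, M r j = true)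
    (hinj : Function.Injective fun j : Fin n => fun k : Fin m => M k j)
    (hnc : ∀ c i j : Fin n, InConflict M i j → ¬ (Contained M c i ∧ Contained M c j)) :
    (gammaBar M : ℕ∞) = ∑ r : Fin m, (conflictGraph M r).chromaticNumber ∧
    gammaBar M = ∑ r : Fin m, sigmaMr M r := by
  classical
  -- Per-row chromatic number equality
  have hchrom : ∀ r : Fin m, (conflictGraph M r).chromaticNumber = (sigmaMr M r : ℕ∞) := by
    intro r
    apply le_antisymm
    · have hcol : ∀ x : {c : Fin n // M r c = true},
          ∃ a, IsSourceCol M r a ∧ Contained M a.1 x.1 :=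
        fun x => exists_source_below hinj r _ x le_rfl
      choose col hcol1 hcol2 using hcol
      have hvalid : ∀ {x y : {c : Fin n // M r c = true}}, (conflictGraph M r).Adj x y →
          (⟨col x, hcol1 x⟩ : {a // IsSourceCol M r a}) ≠ ⟨col y, hcol1 y⟩ := by
        intro x y hadj heq
        have hcc : col x = col y := congrArg Subtype.val heq
        refine hnc (col x).1 x.1 y.1 hadj ⟨hcol2 x, ?_⟩
        rw [hcc]; exact hcol2 y
      let C : (conflictGraph M r).Coloring {a : {c : Fin n // M r c = true} // IsSourceCol M r a} :=
        SimpleGraph.Coloring.mk (fun x => ⟨col x, hcol1 x⟩) hvalid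
      have := C.colorable.chromaticNumber_le
      rwa [show Fintype.card {a : {c : Fin n // M r c = true} // IsSourceCol M r a} = sigmaMr M r
        from by rw [sigmaMr, Nat.card_eq_fintype_card]] at this
    · let s : Finset {c : Fin n // M r c = true} := Finset.univ.filter fun x => IsSourceCol M r x
      have hsclique : (conflictGraph M r).IsClique (s : Set _) := by
        intro x hx y hy hne
        simp only [s, Finset.coe_filter, Set.mem_setOf_eq, Finset.mem_univ, true_and] at hx hy
        exact sources_conflict hx hy hne
      have hcard : s.card = sigmaMr M r := by
        rw [sigmaMr, Nat.card_eq_fintype_card, Fintype.card_subtype]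
      calc (sigmaMr M r : ℕ∞) = (s.card : ℕ∞) := by rw [hcard]
        _ ≤ _ := hsclique.card_le_chromaticNumber
  -- gammaBar = sum of sigmas
  have hmem : (∑ r : Fin m, sigmaMr M r) ∈ {k : ℕ | ∃ (M' : Fin k → Fin n → Bool)
      (f : Fin k → Fin m), IsRowSplit M M' f ∧ ConflictFree M'} := by
    have hcardI : Fintype.card (Σ r : Fin m, {a : {c : Fin n // M r c = true} //
        IsSourceCol M r a}) = ∑ r : Fin m, sigmaMr M r := by
      rw [Fintype.card_sigma]
      exact Finset.sum_congr rfl fun r _ => by rw [sigmaMr, Nat.card_eq_fintype_card]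
    let e : Fin (∑ r : Fin m, sigmaMr M r) ≃
        Σ r : Fin m, {a : {c : Fin n // M r c = true} // IsSourceCol M r a} :=
      (Fintype.equivFinOfCardEq hcardI).symm
    refine ⟨fun k c => M (e k).1 c && decide (Contained M (e k).2.1.1 c),
      fun k => (e k).1, ?_, ?_⟩
    · intro i j
      constructor
      · intro h
        obtain ⟨a, ha1, ha2⟩ :=
          exists_source_below hinj i _ (⟨j, h⟩ : {c : Fin n // M i c = true}) le_rfl
        refine ⟨e.symm ⟨i, ⟨a, ha1⟩⟩, ?_, ?_⟩
        · show (e (e.symm ⟨i, ⟨a, ha1⟩⟩)).1 = i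
          rw [Equiv.apply_symm_apply]
        · show (M (e (e.symm ⟨i, ⟨a, ha1⟩⟩)).1 j &&
            decide (Contained M (e (e.symm ⟨i, ⟨a, ha1⟩⟩)).2.1.1 j)) = true
          rw [show e (e.symm ⟨i, ⟨a, ha1⟩⟩) = ⟨i, ⟨a, ha1⟩⟩ from Equiv.apply_symm_apply _ _]
          simp only [Bool.and_eq_true, decide_eq_true_eq]
          exact ⟨h, ha2⟩
      · rintro ⟨k, rfl, hk⟩
        simp only [Bool.and_eq_true, decide_eq_true_eq] at hk
        exact hk.1
    · intro c d hcd
      obtain ⟨p, p', p'', h1, h2, h3, h4, h5, h6⟩ := hcd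
      simp only [Bool.and_eq_true, decide_eq_true_eq] at h1 h2 h4 h5
      have hncd : ¬ InConflict M c d := fun hconf => hnc _ c d hconf ⟨h1.2, h2.2⟩
      rcases contained_or hncd h1.1 h2.1 with hc | hc
      · have : (M (e p'').1 d && decide (Contained M (e p'').2.1.1 d)) = true := by
          simp only [Bool.and_eq_true, decide_eq_true_eq]
          exact ⟨hc _ h5.1, contained_trans h5.2 hc⟩
        simp only [this] at h6
        exact Bool.noConfusion h6
      · have : (M (e p').1 c && decide (Contained M (e p').2.1.1 c)) = true := by
          simp only [Bool.and_eq_true, decide_eq_true_eq]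
          exact ⟨hc _ h4.1, contained_trans h4.2 hc⟩
        simp only [this] at h3
        exact Bool.noConfusion h3
  have hgb : gammaBar M = ∑ r : Fin m, sigmaMr M r := by
    refine le_antisymm (Nat.sInf_le hmem) ?_
    have hmem' := Nat.sInf_mem (⟨_, hmem⟩ : Set.Nonempty _)
    obtain ⟨M', f, hs, hc⟩ := hmem'
    exact sum_sigma_le hs hc
  refine ⟨?_, hgb⟩
  rw [hgb]
  calc ((∑ r : Fin m, sigmaMr M r : ℕ) : ℕ∞) = ∑ r : Fin m, (sigmaMr M r : ℕ∞) :=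
        Nat.cast_sum _ _
    _ = ∑ r : Fin m, (conflictGraph M r).chromaticNumber :=
        Finset.sum_congr rfl fun r _ => (hchrom r).symm

end MPP
end

section
/- Let M be an m×n binary matrix with pairwise distinct columns such that no column of M is contained in both columns of a pair of conflicting columns. Define a binary matrix M' with n columns as follows: for each row r of M, with c_{r,1},…,c_{r,σ(M,r)} the sources of the directed containment graph H⃗_{M,r}, add σ(M,r) rows r'_1,…,r'_{σ(M,r)} to M', where M'_{r'_k, j} = 1 if and only if M_{r,j} = 1 and column c_{r,k} of M is contained in column j of M. Then M' is a conflict-free row split of M with Σ_r σ(M,r) rows. -/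
namespace MPP

/-- The matrix `M'` produced by the algorithm: for each row `r` of `M` and each source `c` of
the directed containment graph `H⃗_{M,r}`, there is a row whose entry in column `j` is `1` iff
`M_{r,j} = 1` and column `c` is contained in column `j`. -/
def algMatrix {m n : ℕ} (M : Fin m → Fin n → Bool) :
    (Σ r : Fin m, {j : {c : Fin n // M r c = true} // IsSourceCol M r j}) → Fin n → Bool :=
  fun p j => M p.1 j && decide (Contained M p.2.1.1 j)

lemma exists_source_aux {m n : ℕ} (M : Fin m → Fin n → Bool)
    (hinj : Function.Injective fun j : Fin n => fun k : Fin m => M k j)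
    (r : Fin m) :
    ∀ N (j : Fin n), (Finset.univ.filter (fun k => M k j = true)).card ≤ N →
      ∀ h : M r j = true,
      ∃ (c : Fin n) (hc : M r c = true), IsSourceCol M r ⟨c, hc⟩ ∧ Contained M c j := by
  intro N
  induction N with
  | zero =>
    intro j hcard h
    exfalso
    have : r ∈ Finset.univ.filter (fun k => M k j = true) := by simp [h]
    have := Finset.card_pos.mpr ⟨r, this⟩
    omega
  | succ N ih =>
    intro j hcard h
    by_cases hs : IsSourceCol M r ⟨j, h⟩
    · exact ⟨j, h, hs, fun k hk => hk⟩
    · simp only [IsSourceCol, not_forall] at hs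
      obtain ⟨i, hne, hcon⟩ := hs
      simp only [not_not] at hcon
      have hij : i.1 ≠ j := fun heq => hne (Subtype.ext heq)
      have hsub : (Finset.univ.filter (fun k => M k i.1 = true)) ⊂
          (Finset.univ.filter (fun k => M k j = true)) := by
        constructor
        · intro k hk
          simp only [Finset.mem_filter, Finset.mem_univ, true_and] at hk ⊢
          exact hcon k hk
        · intro hsup
          apply hij
          apply hinj
          funext k
          simp only []
          by_cases hki : M k i.1 = true
          · rw [hki, hcon k hki]
          · by_cases hkj : M k j = true
            · have : k ∈ Finset.univ.filter (fun k => M k i.1 = true) :=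
                hsup (by simp [hkj])
              simp only [Finset.mem_filter] at this
              exact absurd this.2 hki
            · rw [Bool.not_eq_true] at hki hkj; rw [hki, hkj]
      have hlt := Finset.card_lt_card hsub
      obtain ⟨c, hc, hsrc, hcc⟩ := ih i.1 (by omega) i.2
      exact ⟨c, hc, hsrc, fun k hk => hcon k (hcc k hk)⟩

lemma exists_source {m n : ℕ} (M : Fin m → Fin n → Bool)
    (hinj : Function.Injective fun j : Fin n => fun k : Fin m => M k j)
    (r : Fin m) (j : Fin n) (h : M r j = true) :
    ∃ (c : Fin n) (hc : M r c = true), IsSourceCol M r ⟨c, hc⟩ ∧ Contained M c j :=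
  exists_source_aux M hinj r _ j le_rfl h

/-- If `M` has pairwise distinct columns and no column of `M` is contained in both columns of a
pair of conflicting columns, then the algorithm's matrix is a conflict-free row split of `M`
with `Σ_r σ(M,r)` rows. -/
theorem stmt_9 {m n : ℕ} (M : Fin m → Fin n → Bool)
    (hinj : Function.Injective fun j : Fin n => fun k : Fin m => M k j)
    (hnc : ∀ c i j : Fin n, InConflict M i j → ¬ (Contained M c i ∧ Contained M c j)) :
    ConflictFree (algMatrix M) ∧
    IsRowSplit M (algMatrix M) (fun p => p.1) ∧
    Nat.card (Σ r : Fin m, {j : {c : Fin n // M r c = true} // IsSourceCol M r j}) =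
      ∑ r : Fin m, sigmaMr M r := by
  refine ⟨?_, ?_, ?_⟩
  · -- conflict-free
    intro i j hconf
    obtain ⟨p, p', p'', h1, h2, h3, h4, h5, h6⟩ := hconf
    simp only [algMatrix, Bool.and_eq_true, decide_eq_true_eq, Bool.and_eq_false_iff] at h1 h2 h3 h4 h5 h6
    -- from row p : column p.2.1.1 contained in both i and j
    have hci : Contained M p.2.1.1 i := h1.2
    have hcj : Contained M p.2.1.1 j := h2.2
    have hnconf : ¬ InConflict M i j := fun hc => hnc p.2.1.1 i j hc ⟨hci, hcj⟩
    by_cases hij : Contained M i j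
    · -- contradiction with row p'' : M' p'' i = 1, M' p'' j = 0
      rcases h6 with h6 | h6
      · exact absurd (hij _ h5.1) (by simp [h6])
      · exact (of_decide_eq_false h6) (fun k hk => hij k (h5.2 k hk))
    · have hji : Contained M j i := by
        by_contra hji
        simp only [Contained, not_forall] at hij hji
        push_neg at hij hji
        obtain ⟨k1, hk1, hk1'⟩ := hij
        obtain ⟨k2, hk2, hk2'⟩ := hji
        exact hnconf ⟨p.1, k2, k1, h1.1, h2.1, Bool.eq_false_iff.mpr hk2', hk2,
          hk1, Bool.eq_false_iff.mpr hk1'⟩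
      -- row p' : M' p' i = 0, M' p' j = 1
      rcases h3 with h3 | h3
      · exact absurd (hji _ h4.1) (by simp [h3])
      · exact (of_decide_eq_false h3) (fun k hk => hji k (h4.2 k hk))
  · -- row split
    intro i j
    constructor
    · intro h
      obtain ⟨c, hc, hsrc, hcc⟩ := exists_source M hinj i j h
      exact ⟨⟨i, ⟨⟨c, hc⟩, hsrc⟩⟩, rfl, by simp [algMatrix, h, hcc]⟩
    · rintro ⟨p, rfl, hp⟩
      simp only [algMatrix, Bool.and_eq_true] at hp
      exact hp.1
  · -- cardinality
    classical
    rw [Nat.card_eq_fintype_card, Fintype.card_sigma]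
    congr 1
    funext r
    rw [sigmaMr, Nat.card_eq_fintype_card]

end MPP
end

section
/- Let M be an m×n binary matrix with no all-zero row such that for any two distinct columns i and j of M, column i is not contained in column j. Then γ̄(M) equals the total number of 1-entries of M. -/
namespace MPP

/-- Corollary 2: if `M` has no all-zero row and no column of `M` is contained in another one,
then `γ̄(M)` equals the total number of `1`-entries of `M`. -/
theorem stmt_10 {m n : ℕ} (M : Fin m → Fin n → Bool)
    (hrow : ∀ r : Fin m, ∃ j, M r j = true)
    (hnc : ∀ i j : Fin n, i ≠ j → ¬ Contained M i j) :
    gammaBar M = ∑ r : Fin m, (Finset.univ.filter fun j : Fin n => M r j = true).card := by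
  classical
  set N := ∑ r : Fin m, (Finset.univ.filter fun j : Fin n => M r j = true).card with hN
  have hcard : Fintype.card (Σ r : Fin m, {j : Fin n // M r j = true}) = N := by
    simp [Fintype.card_sigma, Fintype.card_subtype, hN]
  -- Upper bound: explicit conflict-free row split with N rows
  obtain ⟨e⟩ : Nonempty ((Σ r : Fin m, {j : Fin n // M r j = true}) ≃ Fin N) :=
    ⟨Fintype.equivFinOfCardEq hcard⟩
  have hmem : N ∈ {k : ℕ | ∃ (M' : Fin k → Fin n → Bool) (f : Fin k → Fin m),
      IsRowSplit M M' f ∧ ConflictFree M'} := by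
    refine ⟨fun k j => decide (j = (e.symm k).2.1), fun k => (e.symm k).1, ?_, ?_⟩
    · intro i j
      constructor
      · intro h
        refine ⟨e ⟨i, ⟨j, h⟩⟩, ?_, ?_⟩
        · simp
        · show decide _ = true
          rw [e.symm_apply_apply]
          simp
      · rintro ⟨k, hf, hM⟩
        have hj : j = (e.symm k).2.1 := by simpa using hM
        subst hj
        rw [← hf]
        exact (e.symm k).2.2
    · rintro i j ⟨r, r', r'', h1, h2, h3, h4, _, _⟩
      have hi : i = (e.symm r).2.1 := by simpa using h1
      have hj : j = (e.symm r).2.1 := by simpa using h2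
      rw [hi, ← hj] at h3
      rw [h3] at h4
      exact Bool.false_ne_true h4
  -- Lower bound: any conflict-free row split has at least N rows
  have hlb : ∀ k ∈ {k : ℕ | ∃ (M' : Fin k → Fin n → Bool) (f : Fin k → Fin m),
      IsRowSplit M M' f ∧ ConflictFree M'}, N ≤ k := by
    rintro k ⟨M', f, hsplit, hcf⟩
    -- each row of M' has at most one 1
    have hone : ∀ (r : Fin k) (j1 j2 : Fin n), M' r j1 = true → M' r j2 = true → j1 = j2 := by
      intro r j1 j2 h1 h2
      by_contra hne
      have lift : ∀ a b : Fin n, (∀ s : Fin k, M' s a = true → M' s b = true) →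
          Contained M a b := by
        intro a b hab t ht
        rw [hsplit] at ht ⊢
        obtain ⟨s, hs, hm⟩ := ht
        exact ⟨s, hs, hab s hm⟩
      by_cases hA : ∃ r', M' r' j1 = false ∧ M' r' j2 = true
      · by_cases hB : ∃ r'', M' r'' j1 = true ∧ M' r'' j2 = false
        · obtain ⟨r', ha1, ha2⟩ := hA
          obtain ⟨r'', hb1, hb2⟩ := hB
          exact hcf j1 j2 ⟨r, r', r'', h1, h2, ha1, ha2, hb1, hb2⟩
        · push_neg at hB
          refine hnc j1 j2 hne (lift j1 j2 ?_)
          intro s hs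
          by_contra hc
          exact absurd (hB s hs) (by simpa using hc)
      · push_neg at hA
        refine hnc j2 j1 (Ne.symm hne) (lift j2 j1 ?_)
        intro s hs
        by_contra hc
        have := hA s
        rw [Bool.not_eq_true] at hc
        exact absurd hs (by simpa using this hc)
    -- inject the 1-entries into rows of M'
    have hinj : ∃ g : (Σ r : Fin m, {j : Fin n // M r j = true}) → Fin k,
        Function.Injective g := by
      have hc : ∀ p : Σ r : Fin m, {j : Fin n // M r j = true},
          ∃ s : Fin k, f s = p.1 ∧ M' s p.2.1 = true := by
        intro p; exact (hsplit p.1 p.2.1).mp p.2.2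
      choose g hg1 hg2 using hc
      refine ⟨g, ?_⟩
      intro a b hab
      have h1 : a.1 = b.1 := by rw [← hg1 a, ← hg1 b, hab]
      have h2 : a.2.1 = b.2.1 := hone (g a) a.2.1 b.2.1 (hg2 a) (by rw [hab]; exact hg2 b)
      obtain ⟨a1, a2, ha⟩ := a
      obtain ⟨b1, b2, hb⟩ := b
      simp only at h1 h2
      subst h1
      simp_all
    obtain ⟨g, hg⟩ := hinj
    calc N = Fintype.card (Σ r : Fin m, {j : Fin n // M r j = true}) := hcard.symm
      _ ≤ Fintype.card (Fin k) := Fintype.card_le_of_injective g hg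
      _ = k := Fintype.card_fin k
  exact le_antisymm (Nat.sInf_le hmem) (le_csInf ⟨N, hmem⟩ hlb)

end MPP
end

section
/- Let G = (V,E) be a simple cubic graph and let M(G) be the (|V|+3)×(|E|+3) binary matrix associated with G. Then G is 3-edge-colorable if and only if γ̄(M(G)) ≤ 3|V|+3. -/
namespace MPP

/-- A set of edges is a matching if its elements are pairwise disjoint. -/
def IsMatchingSet {V : Type*} (s : Set (Sym2 V)) : Prop :=
  ∀ e ∈ s, ∀ f ∈ s, e ≠ f → ∀ v : V, ¬ (v ∈ e ∧ v ∈ f)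

/-- A graph is 3-edge-colorable if its edge set can be partitioned into three matchings. -/
def ThreeEdgeColorable {V : Type*} (G : SimpleGraph V) : Prop :=
  ∃ E₁ E₂ E₃ : Set (Sym2 V), E₁ ∪ E₂ ∪ E₃ = G.edgeSet ∧
    Disjoint E₁ E₂ ∧ Disjoint E₁ E₃ ∧ Disjoint E₂ E₃ ∧
    IsMatchingSet E₁ ∧ IsMatchingSet E₂ ∧ IsMatchingSet E₃

/-- The `(|V|+3) × (|E|+3)` binary matrix `M(G)` associated with a graph `G`, with rows indexed
by `V ∪ {r₁,r₂,r₃}` and columns indexed by `E ∪ {c₁,c₂,c₃}`. -/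
def Mcubic {V : Type*} [DecidableEq V] (G : SimpleGraph V) :
    (V ⊕ Fin 3) → (↥G.edgeSet ⊕ Fin 3) → Bool
  | Sum.inl v, Sum.inl e => decide (v ∈ (e : Sym2 V))
  | Sum.inl _, Sum.inr _ => true
  | Sum.inr _, Sum.inl _ => false
  | Sum.inr i, Sum.inr j => decide (i = j)

end MPP

namespace MPP

section AuxLemmas

variable {α β γ : Type*}

/-- Membership lemma for the defining set of `gammaBar`, via an arbitrary finite row index. -/
theorem mem_splitSet [Fintype γ] (M : α → β → Bool) (M' : γ → β → Bool)
    (f : γ → α) (h1 : IsRowSplit M M' f) (h2 : ConflictFree M') :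
    Fintype.card γ ∈ {k : ℕ | ∃ (N : Fin k → β → Bool) (g : Fin k → α),
      IsRowSplit M N g ∧ ConflictFree N} := by
  refine ⟨M' ∘ (Fintype.equivFin γ).symm, f ∘ (Fintype.equivFin γ).symm, ?_, ?_⟩
  · intro i j
    rw [h1 i j]
    constructor
    · rintro ⟨k, hk1, hk2⟩
      exact ⟨Fintype.equivFin γ k, by simpa using hk1, by simpa using hk2⟩
    · rintro ⟨k, hk1, hk2⟩
      exact ⟨(Fintype.equivFin γ).symm k, hk1, hk2⟩
  · rintro i j ⟨r, r', r'', hs1, hs2, hs3, hs4, hs5, hs6⟩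
    exact h2 i j ⟨_, _, _, hs1, hs2, hs3, hs4, hs5, hs6⟩

/-- The defining set of `gammaBar` is nonempty (split each row into one row per 1-entry). -/
theorem splitSet_nonempty [Fintype α] [Fintype β] [DecidableEq β] (M : α → β → Bool) :
    {k : ℕ | ∃ (N : Fin k → β → Bool) (g : Fin k → α),
      IsRowSplit M N g ∧ ConflictFree N}.Nonempty := by
  refine ⟨_, mem_splitSet M (γ := {p : α × β // M p.1 p.2 = true})
    (fun p j => decide (j = p.1.2)) (fun p => p.1.1) ?_ ?_⟩
  · intro i j
    constructor
    · intro h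
      exact ⟨⟨(i, j), h⟩, rfl, by simp⟩
    · rintro ⟨⟨⟨a, b⟩, hp⟩, h1, h2⟩
      simp only at h1
      rw [decide_eq_true_eq] at h2
      subst h1; subst h2
      exact hp
  · rintro i j ⟨r, r', r'', h1, h2, h3, h4, h5, h6⟩
    simp only [decide_eq_true_eq] at h1 h2
    subst h1
    subst h2
    rw [h4] at h3
    simp at h3

end AuxLemmas

section Forward

open scoped Classical in
/-- The conflict-free row split of `Mcubic G` built from a 3-edge-coloring `col`. -/
noncomputable def Msplit {V : Type*} [DecidableEq V] (G : SimpleGraph V)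
    (col : Fin 3 → Set (Sym2 V)) :
    ((V × Fin 3) ⊕ Fin 3) → (↥G.edgeSet ⊕ Fin 3) → Bool
  | Sum.inl vi, Sum.inl ε => decide ((vi.1 ∈ (ε : Sym2 V)) ∧ (ε : Sym2 V) ∈ col vi.2)
  | Sum.inl vi, Sum.inr j => decide (vi.2 = j)
  | Sum.inr _, Sum.inl _ => false
  | Sum.inr i, Sum.inr j => decide (i = j)

/-- The row assignment for `Msplit`. -/
def fsplit {V : Type*} : ((V × Fin 3) ⊕ Fin 3) → (V ⊕ Fin 3)
  | Sum.inl vi => Sum.inl vi.1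
  | Sum.inr i => Sum.inr i

theorem forward_aux {V : Type*} [Fintype V] [DecidableEq V] (G : SimpleGraph V)
    (col : Fin 3 → Set (Sym2 V))
    (hcov : ∀ e ∈ G.edgeSet, ∃ i, e ∈ col i)
    (hdisj : ∀ (e : Sym2 V) (i j : Fin 3), e ∈ col i → e ∈ col j → i = j)
    (hmat : ∀ i, IsMatchingSet (col i)) :
    gammaBar (Mcubic G) ≤ 3 * Fintype.card V + 3 := by
  classical
  have hedge : ∀ (a : (V × Fin 3) ⊕ Fin 3) (ε : ↥G.edgeSet),
      Msplit G col a (Sum.inl ε) = true →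
      ∃ v i, a = Sum.inl (v, i) ∧ v ∈ (ε : Sym2 V) ∧ (ε : Sym2 V) ∈ col i := by
    rintro (⟨v, i⟩ | i) ε h
    · simp only [Msplit, decide_eq_true_eq] at h
      exact ⟨v, i, rfl, h.1, h.2⟩
    · simp [Msplit] at h
  have hsplit : IsRowSplit (Mcubic G) (Msplit G col) fsplit := by
    rintro (v | i) (ε | j)
    · simp only [Mcubic, decide_eq_true_eq]
      constructor
      · intro hv
        obtain ⟨i, hi⟩ := hcov (ε : Sym2 V) ε.2
        exact ⟨Sum.inl (v, i), rfl, by simp [Msplit, hv, hi]⟩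
      · rintro ⟨(⟨v', i⟩ | i), hk1, hk2⟩
        · simp only [fsplit, Sum.inl.injEq] at hk1
          subst hk1
          simp only [Msplit, decide_eq_true_eq] at hk2
          exact hk2.1
        · simp [fsplit] at hk1
    · refine iff_of_true rfl ⟨Sum.inl (v, j), rfl, by simp [Msplit]⟩
    · constructor
      · intro h
        simp [Mcubic] at h
      · rintro ⟨(⟨v', i'⟩ | i'), hk1, hk2⟩
        · simp [fsplit] at hk1
        · simp [Msplit] at hk2
    · simp only [Mcubic, decide_eq_true_eq]
      constructor
      · intro h
        subst h
        exact ⟨Sum.inr i, rfl, by simp [Msplit]⟩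
      · rintro ⟨(⟨v', i'⟩ | i'), hk1, hk2⟩
        · simp [fsplit] at hk1
        · simp only [fsplit, Sum.inr.injEq] at hk1
          subst hk1
          simpa [Msplit] using hk2
  have hcfree : ConflictFree (Msplit G col) := by
    rintro c d ⟨r, r', r'', h1, h2, h3, h4, h5, h6⟩
    have hc : ∀ (a : (V × Fin 3) ⊕ Fin 3) (j : Fin 3),
        Msplit G col a (Sum.inr j) = true →
        (∃ v, a = Sum.inl (v, j)) ∨ a = Sum.inr j := by
      rintro (⟨v, i⟩ | i) j h
      · simp only [Msplit, decide_eq_true_eq] at h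
        subst h
        exact Or.inl ⟨v, rfl⟩
      · simp only [Msplit, decide_eq_true_eq] at h
        subst h
        exact Or.inr rfl
    match c, d with
    | Sum.inl ε, Sum.inl φ =>
      obtain ⟨v, i, hre, hvε, hεi⟩ := hedge r ε h1
      obtain ⟨v', i', hre', hvφ, hφi⟩ := hedge r φ h2
      rw [hre] at hre'
      simp only [Sum.inl.injEq, Prod.mk.injEq] at hre'
      obtain ⟨hv, hi⟩ := hre'
      subst hv; subst hi
      have hne : (ε : Sym2 V) ≠ (φ : Sym2 V) := by
        intro hh
        rw [show ε = φ from Subtype.ext hh, h4] at h3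
        exact Bool.false_ne_true h3.symm
      exact hmat i (ε : Sym2 V) hεi (φ : Sym2 V) hφi hne v ⟨hvε, hvφ⟩
    | Sum.inl ε, Sum.inr j =>
      obtain ⟨v, i, hre, hvε, hεi⟩ := hedge r ε h1
      rw [hre] at h2
      simp only [Msplit, decide_eq_true_eq] at h2
      subst h2
      obtain ⟨v'', i'', hre'', hvε'', hεi''⟩ := hedge r'' ε h5
      have : i'' = i := hdisj (ε : Sym2 V) i'' i hεi'' hεi
      subst this
      rw [hre''] at h6
      simp [Msplit] at h6
    | Sum.inr j, Sum.inl ε =>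
      obtain ⟨v, i, hre, hvε, hεi⟩ := hedge r ε h2
      rw [hre] at h1
      simp only [Msplit, decide_eq_true_eq] at h1
      subst h1
      obtain ⟨v', i', hre', hvε', hεi'⟩ := hedge r' ε h4
      have : i' = i := hdisj (ε : Sym2 V) i' i hεi' hεi
      subst this
      rw [hre'] at h3
      simp [Msplit] at h3
    | Sum.inr i, Sum.inr j =>
      have hij : i = j := by
        rcases hc r i h1 with ⟨v, hrv⟩ | hrv <;> rw [hrv] at h2 <;>
          simpa [Msplit] using h2
      subst hij
      rw [h4] at h3
      exact Bool.false_ne_true h3.symm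
  have hle := Nat.sInf_le (mem_splitSet (Mcubic G) (Msplit G col) fsplit hsplit hcfree)
  calc gammaBar (Mcubic G) ≤ Fintype.card ((V × Fin 3) ⊕ Fin 3) := hle
    _ = 3 * Fintype.card V + 3 := by
        simp [Fintype.card_sum, Fintype.card_prod]
        ring

end Forward

section Backward

theorem backward_aux {V : Type*} [Fintype V] [DecidableEq V] (G : SimpleGraph V)
    [DecidableRel G.Adj]
    (h : gammaBar (Mcubic G) ≤ 3 * Fintype.card V + 3) : ThreeEdgeColorable G := by
  classical
  have hne := splitSet_nonempty (Mcubic G)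
  obtain ⟨M', f, hsplit, hcf⟩ :
      ∃ (M' : Fin (gammaBar (Mcubic G)) → (↥G.edgeSet ⊕ Fin 3) → Bool)
        (f : Fin (gammaBar (Mcubic G)) → (V ⊕ Fin 3)),
        IsRowSplit (Mcubic G) M' f ∧ ConflictFree M' := Nat.sInf_mem hne
  -- basic rows for r_i
  have hr : ∀ i : Fin 3, ∃ k, f k = Sum.inr i ∧ M' k (Sum.inr i) = true := by
    intro i
    exact (hsplit (Sum.inr i) (Sum.inr i)).mp (by simp [Mcubic])
  have hrE : ∀ (k) (i : Fin 3) (ε : ↥G.edgeSet), f k = Sum.inr i →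
      M' k (Sum.inl ε) = false := by
    intro k i ε hk
    by_contra hb
    rw [Bool.not_eq_false] at hb
    have := (hsplit (Sum.inr i) (Sum.inl ε)).mpr ⟨k, hk, hb⟩
    simp [Mcubic] at this
  have hrC : ∀ (k) (i j : Fin 3), f k = Sum.inr i → i ≠ j → M' k (Sum.inr j) = false := by
    intro k i j hk hij
    by_contra hb
    rw [Bool.not_eq_false] at hb
    have := (hsplit (Sum.inr i) (Sum.inr j)).mpr ⟨k, hk, hb⟩
    simp [Mcubic, hij] at this
  -- no row has two distinct c-columns
  have no_two : ∀ (k) (i j : Fin 3), i ≠ j → M' k (Sum.inr i) = true →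
      M' k (Sum.inr j) = true → False := by
    intro k i j hij hki hkj
    obtain ⟨ki, hki1, hki2⟩ := hr i
    obtain ⟨kj, hkj1, hkj2⟩ := hr j
    have hki3 : M' ki (Sum.inr j) = false := hrC ki i j hki1 hij
    have hkj3 : M' kj (Sum.inr i) = false := hrC kj j i hkj1 (Ne.symm hij)
    exact hcf (Sum.inr i) (Sum.inr j) ⟨k, kj, ki, hki, hkj, hkj3, hkj2, hki2, hki3⟩
  -- choose, for each vertex and color, a split row of v carrying c_i
  have hgex : ∀ (v : V) (i : Fin 3), ∃ k, f k = Sum.inl v ∧ M' k (Sum.inr i) = true := by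
    intro v i
    exact (hsplit (Sum.inl v) (Sum.inr i)).mp (by simp [Mcubic])
  choose g hg1 hg2 using hgex
  have hginj : ∀ v : V, Function.Injective (g v) := by
    intro v i j hgij
    by_contra hne'
    exact no_two (g v i) i j hne' (hg2 v i) (hgij ▸ hg2 v j)
  -- counting: each vertex fiber has exactly 3 rows
  set fib : (V ⊕ Fin 3) → Finset (Fin (gammaBar (Mcubic G))) :=
    fun a => Finset.univ.filter (fun k => f k = a) with hfib
  have hcardsum : gammaBar (Mcubic G) = ∑ a : V ⊕ Fin 3, (fib a).card := by
    have := Finset.card_eq_sum_card_fiberwise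
      (f := f) (s := (Finset.univ : Finset (Fin (gammaBar (Mcubic G))))) (t := Finset.univ)
      (fun x _ => Finset.mem_univ (f x))
    simpa using this
  have hB : ∀ v : V, 3 ≤ (fib (Sum.inl v)).card := by
    intro v
    have := Finset.card_le_card_of_injOn (s := (Finset.univ : Finset (Fin 3)))
      (t := fib (Sum.inl v)) (g v)
      (fun i _ => by simp [hfib, hg1 v i]) ((hginj v).injOn)
    simpa using this
  have hC : ∀ i : Fin 3, 1 ≤ (fib (Sum.inr i)).card := by
    intro i
    obtain ⟨k, hk1, _⟩ := hr i
    refine Finset.card_pos.mpr ⟨k, ?_⟩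
    simp [hfib, hk1]
  have hsum2 : ∑ v : V, (fib (Sum.inl v)).card + ∑ i : Fin 3, (fib (Sum.inr i)).card = gammaBar (Mcubic G) := by
    have hss := Fintype.sum_sum_type (fun a : V ⊕ Fin 3 => (fib a).card)
    exact (hcardsum.trans hss).symm
  have hRsum : 3 ≤ ∑ i : Fin 3, (fib (Sum.inr i)).card := by
    calc (3 : ℕ) = ∑ _i : Fin 3, 1 := by simp
    _ ≤ ∑ i : Fin 3, (fib (Sum.inr i)).card := Finset.sum_le_sum (fun i _ => hC i)
  have hfib3 : ∀ v : V, (fib (Sum.inl v)).card = 3 := by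
    intro v
    by_contra hnev
    have hlt : 3 < (fib (Sum.inl v)).card := lt_of_le_of_ne (hB v) (Ne.symm hnev)
    have hstrict : ∑ _v : V, 3 < ∑ v : V, (fib (Sum.inl v)).card :=
      Finset.sum_lt_sum (fun i _ => hB i) ⟨v, Finset.mem_univ v, hlt⟩
    have h3V : ∑ _v : V, 3 = 3 * Fintype.card V := by
      simp [Finset.sum_const, mul_comm]
    omega
  -- every row in a vertex fiber is one of the chosen rows
  have hcover : ∀ (v : V) (k), f k = Sum.inl v → ∃ i : Fin 3, k = g v i := by
    intro v k hk
    have himg : (Finset.univ.image (g v)) ⊆ fib (Sum.inl v) := by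
      intro x hx
      simp only [Finset.mem_image, Finset.mem_univ, true_and] at hx
      obtain ⟨i, rfl⟩ := hx
      simp [hfib, hg1 v i]
    have hcardimg : (Finset.univ.image (g v)).card = 3 := by
      rw [Finset.card_image_of_injective _ (hginj v)]
      simp
    have heq := Finset.eq_of_subset_of_card_le himg (by rw [hfib3 v, hcardimg])
    have hkmem : k ∈ fib (Sum.inl v) := by simp [hfib, hk]
    rw [← heq] at hkmem
    simp only [Finset.mem_image, Finset.mem_univ, true_and] at hkmem
    obtain ⟨i, hi⟩ := hkmem
    exact ⟨i, hi.symm⟩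
  -- rows carrying an edge column are vertex rows
  have hrow_vertex : ∀ (k) (ε : ↥G.edgeSet), M' k (Sum.inl ε) = true →
      ∃ (v : V) (i : Fin 3), k = g v i ∧ v ∈ (ε : Sym2 V) := by
    intro k ε hk
    cases hfk : f k with
    | inl v =>
      obtain ⟨i, hi⟩ := hcover v k hfk
      have hv : v ∈ (ε : Sym2 V) := by
        have := (hsplit (Sum.inl v) (Sum.inl ε)).mpr ⟨k, hfk, hk⟩
        simpa [Mcubic] using this
      exact ⟨v, i, hi, hv⟩
    | inr i =>
      rw [hrE k i ε hfk] at hk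
      exact absurd hk (by simp)
  -- every edge column has a well-defined color
  have hcolor : ∀ ε : ↥G.edgeSet, ∃ i : Fin 3, ∀ k, M' k (Sum.inl ε) = true →
      M' k (Sum.inr i) = true := by
    intro ε
    have hu : (Quot.out (ε : Sym2 V)).1 ∈ (ε : Sym2 V) := Sym2.out_fst_mem _
    obtain ⟨k0, hk01, hk02⟩ := (hsplit (Sum.inl (Quot.out (ε : Sym2 V)).1)
      (Sum.inl ε)).mp (by simp [Mcubic, hu])
    obtain ⟨v0, i0, hk0g, hv0⟩ := hrow_vertex k0 ε hk02
    refine ⟨i0, fun k hk => ?_⟩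
    by_contra hb
    rw [Bool.not_eq_true] at hb
    obtain ⟨kr, hkr1, hkr2⟩ := hr i0
    have hkrE : M' kr (Sum.inl ε) = false := hrE kr i0 ε hkr1
    have hk0c : M' k0 (Sum.inr i0) = true := by rw [hk0g]; exact hg2 v0 i0
    exact hcf (Sum.inl ε) (Sum.inr i0) ⟨k0, kr, k, hk02, hk0c, hkrE, hkr2, hk, hb⟩
  choose color hcol using hcolor
  -- each endpoint's chosen row of the edge's color carries the edge
  have hvert : ∀ (ε : ↥G.edgeSet) (v : V), v ∈ (ε : Sym2 V) →
      M' (g v (color ε)) (Sum.inl ε) = true := by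
    intro ε v hv
    obtain ⟨k, hk1, hk2⟩ := (hsplit (Sum.inl v) (Sum.inl ε)).mp (by simp [Mcubic, hv])
    obtain ⟨i, hki⟩ := hcover v k hk1
    have hcki : M' k (Sum.inr (color ε)) = true := hcol ε k hk2
    have hieq : i = color ε := by
      by_contra hne'
      exact no_two k i (color ε) hne' (hki ▸ hg2 v i) hcki
    rw [← hieq, ← hki]
    exact hk2
  -- the color classes
  set Ecol : Fin 3 → Set (Sym2 V) :=
    fun i => {e : Sym2 V | ∃ h : e ∈ G.edgeSet, color ⟨e, h⟩ = i} with hEcol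
  have hmatch : ∀ i : Fin 3, IsMatchingSet (Ecol i) := by
    intro i e he e' he' hee' v hv12
    obtain ⟨hv1, hv2⟩ := hv12
    obtain ⟨heG, hce⟩ := he
    obtain ⟨heG', hce'⟩ := he'
    obtain ⟨u, rfl⟩ := Sym2.mem_iff_exists.mp hv1
    obtain ⟨w, rfl⟩ := Sym2.mem_iff_exists.mp hv2
    have hadj1 : G.Adj v u := (SimpleGraph.mem_edgeSet G).mp heG
    have hadj2 : G.Adj v w := (SimpleGraph.mem_edgeSet G).mp heG'
    have huw : u ≠ w := fun hh => hee' (by rw [hh])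
    set ε : ↥G.edgeSet := ⟨s(v, u), heG⟩ with hεdef
    set φ : ↥G.edgeSet := ⟨s(v, w), heG'⟩ with hφdef
    have hcε : color ε = i := hce
    have hcφ : color φ = i := hce'
    have h1 : M' (g v i) (Sum.inl ε) = true := by
      have := hvert ε v (by rw [hεdef]; simp)
      rwa [hcε] at this
    have h2 : M' (g v i) (Sum.inl φ) = true := by
      have := hvert φ v (by rw [hφdef]; simp)
      rwa [hcφ] at this
    have h3 : M' (g u i) (Sum.inl ε) = true := by
      have := hvert ε u (by rw [hεdef]; simp)
      rwa [hcε] at this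
    have h4 : M' (g w i) (Sum.inl φ) = true := by
      have := hvert φ w (by rw [hφdef]; simp)
      rwa [hcφ] at this
    have h5 : M' (g u i) (Sum.inl φ) = false := by
      by_contra hb
      rw [Bool.not_eq_false] at hb
      have := (hsplit (Sum.inl u) (Sum.inl φ)).mpr ⟨g u i, hg1 u i, hb⟩
      simp only [Mcubic, decide_eq_true_eq, hφdef] at this
      rw [Sym2.mem_iff] at this
      rcases this with h' | h'
      · exact hadj1.ne' h'
      · exact huw h'
    have h6 : M' (g w i) (Sum.inl ε) = false := by
      by_contra hb
      rw [Bool.not_eq_false] at hb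
      have := (hsplit (Sum.inl w) (Sum.inl ε)).mpr ⟨g w i, hg1 w i, hb⟩
      simp only [Mcubic, decide_eq_true_eq, hεdef] at this
      rw [Sym2.mem_iff] at this
      rcases this with h' | h'
      · exact hadj2.ne' h'
      · exact huw h'.symm
    exact hcf (Sum.inl ε) (Sum.inl φ) ⟨g v i, g w i, g u i, h1, h2, h6, h4, h3, h5⟩
  have hdisjE : ∀ i j : Fin 3, i ≠ j → Disjoint (Ecol i) (Ecol j) := by
    intro i j hij
    rw [Set.disjoint_left]
    rintro e ⟨h1, hc1⟩ ⟨h2, hc2⟩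
    exact hij (hc1.symm.trans hc2)
  refine ⟨Ecol 0, Ecol 1, Ecol 2, ?_, hdisjE 0 1 (by decide), hdisjE 0 2 (by decide),
    hdisjE 1 2 (by decide), hmatch 0, hmatch 1, hmatch 2⟩
  ext e
  constructor
  · rintro ((⟨h', _⟩ | ⟨h', _⟩) | ⟨h', _⟩) <;> exact h'
  · intro heG
    have htri : ∀ j : Fin 3, j = 0 ∨ j = 1 ∨ j = 2 := by decide
    rcases htri (color ⟨e, heG⟩) with hc | hc | hc
    · exact Or.inl (Or.inl ⟨heG, hc⟩)
    · exact Or.inl (Or.inr ⟨heG, hc⟩)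
    · exact Or.inr ⟨heG, hc⟩

end Backward

/-- A simple cubic graph `G` is 3-edge-colorable iff `γ̄(M(G)) ≤ 3|V|+3`. -/
theorem stmt_12 {V : Type*} [Fintype V] [DecidableEq V] (G : SimpleGraph V)
    [DecidableRel G.Adj] (hcubic : ∀ v : V, G.degree v = 3) :
    ThreeEdgeColorable G ↔ gammaBar (Mcubic G) ≤ 3 * Fintype.card V + 3 := by
  constructor
  · rintro ⟨E₁, E₂, E₃, hun, h12, h13, h23, m1, m2, m3⟩
    set col : Fin 3 → Set (Sym2 V) := ![E₁, E₂, E₃] with hcol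
    apply forward_aux G col
    · intro e he
      rw [← hun] at he
      rcases he with (h | h) | h
      exacts [⟨0, h⟩, ⟨1, h⟩, ⟨2, h⟩]
    · intro e i j hi hj
      fin_cases i <;> fin_cases j <;> simp only [hcol] at hi hj <;> simp at hi hj <;>
        first
          | rfl
          | exact absurd hj (Set.disjoint_left.mp h12 hi)
          | exact absurd hj (Set.disjoint_left.mp h13 hi)
          | exact absurd hj (Set.disjoint_left.mp h23 hi)
          | exact absurd hi (Set.disjoint_left.mp h12 hj)
          | exact absurd hi (Set.disjoint_left.mp h13 hj)
          | exact absurd hi (Set.disjoint_left.mp h23 hj)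
    · intro i
      fin_cases i
      exacts [m1, m2, m3]
  · exact backward_aux G

end MPP
end

section
/- Let G = (V,E) be a simple cubic graph and let M = M(G) be the (|V|+3)×(|E|+3) binary matrix associated with G. Then for every row indexed by a vertex v ∈ V, the conflict graph G_{M,v} is isomorphic to the disjoint union of two complete graphs on three vertices, so χ(G_{M,v}) = 3; for every row indexed by r ∈ {r_1,r_2,r_3}, G_{M,r} consists of a single vertex, so χ(G_{M,r}) = 1. Consequently Σ_r χ(G_{M,r}) = 3|V|+3. -/
namespace MPP


section Aux
variable {V : Type*} [DecidableEq V] {G : SimpleGraph V}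

lemma conflict_cc (v : V) {i j : Fin 3} (hij : i ≠ j) :
    InConflict (Mcubic G) (Sum.inr i : ↥G.edgeSet ⊕ Fin 3) (Sum.inr j) := by
  refine ⟨Sum.inl v, Sum.inr j, Sum.inr i, ?_, ?_, ?_, ?_, ?_, ?_⟩ <;>
    simp [Mcubic, hij, hij.symm]

lemma not_conflict_ec (e : G.edgeSet) (j : Fin 3) :
    ¬ InConflict (Mcubic G) (Sum.inl e : ↥G.edgeSet ⊕ Fin 3) (Sum.inr j) := by
  rintro ⟨r, r', r'', -, -, -, -, h5, h6⟩
  cases r'' with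
  | inl u => simp [Mcubic] at h6
  | inr i => simp [Mcubic] at h5

lemma conflict_ee {e f : G.edgeSet} {v : V} (hv : v ∈ (e : Sym2 V)) (hw : v ∈ (f : Sym2 V))
    (hne : e ≠ f) :
    InConflict (Mcubic G) (Sum.inl e : ↥G.edgeSet ⊕ Fin 3) (Sum.inl f) := by
  have hde : ¬ (e : Sym2 V).IsDiag := G.not_isDiag_of_mem_edgeSet e.2
  have hdf : ¬ (f : Sym2 V).IsDiag := G.not_isDiag_of_mem_edgeSet f.2
  set a := Sym2.Mem.other hv with ha
  set b := Sym2.Mem.other hw with hb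
  have hae : a ∈ (e : Sym2 V) := Sym2.other_mem hv
  have hbf : b ∈ (f : Sym2 V) := Sym2.other_mem hw
  have hav : a ≠ v := Sym2.other_ne hde hv
  have hbv : b ≠ v := Sym2.other_ne hdf hw
  have hne' : (e : Sym2 V) ≠ (f : Sym2 V) := fun h => hne (Subtype.ext h)
  have haf : a ∉ (f : Sym2 V) := fun haf => hne' (Sym2.eq_of_ne_mem hav hae hv haf hw)
  have hbe : b ∉ (e : Sym2 V) := fun hbe => hne' (Sym2.eq_of_ne_mem hbv hbe hv hbf hw)
  refine ⟨Sum.inl v, Sum.inl b, Sum.inl a, ?_, ?_, ?_, ?_, ?_, ?_⟩ <;>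
    simp [Mcubic, hv, hw, hae, hbf, haf, hbe]

/-- The vertex set of the conflict graph at row `inl v`, as edges at `v` plus three columns. -/
def vertexEquiv (G : SimpleGraph V) (v : V) :
    {c : ↥G.edgeSet ⊕ Fin 3 // Mcubic G (Sum.inl v) c = true} ≃
      ({e : G.edgeSet // v ∈ (e : Sym2 V)} ⊕ Fin 3) where
  toFun c := match c with
    | ⟨Sum.inl e, h⟩ => Sum.inl ⟨e, by simpa [Mcubic] using h⟩
    | ⟨Sum.inr j, _⟩ => Sum.inr j
  invFun := Sum.elim (fun e => ⟨Sum.inl e.1, by simp [Mcubic, e.2]⟩) (fun j => ⟨Sum.inr j, rfl⟩)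
  left_inv := by rintro ⟨(e | j), h⟩ <;> rfl
  right_inv := by rintro (e | j) <;> rfl

lemma card_inc [Fintype V] [DecidableRel G.Adj] (v : V) :
    Fintype.card {e : G.edgeSet // v ∈ (e : Sym2 V)} = G.degree v := by
  rw [← SimpleGraph.card_incidenceSet_eq_degree]
  exact Fintype.card_congr (Equiv.subtypeSubtypeEquivSubtypeInter (· ∈ G.edgeSet) (v ∈ ·))

lemma iso_exists [Fintype V] [DecidableRel G.Adj] (hcubic : ∀ v : V, G.degree v = 3) (v : V) :
    Nonempty (conflictGraph (Mcubic G) (Sum.inl v) ≃g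
      (SimpleGraph.completeGraph (Fin 3) ⊕g SimpleGraph.completeGraph (Fin 3))) := by
  have hcard : Fintype.card {e : G.edgeSet // v ∈ (e : Sym2 V)} = 3 := by
    rw [card_inc, hcubic]
  obtain ⟨φ⟩ := Fintype.card_eq.mp (hcard.trans (Fintype.card_fin 3).symm)
  refine ⟨⟨(vertexEquiv G v).trans (Equiv.sumCongr φ (Equiv.refl (Fin 3))), ?_⟩⟩
  rintro ⟨(e | i), ha⟩ ⟨(f | j), hb⟩
  · have hv : v ∈ (e : Sym2 V) := by simpa [Mcubic] using ha
    have hw : v ∈ (f : Sym2 V) := by simpa [Mcubic] using hb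
    show φ _ ≠ φ _ ↔ _
    rw [φ.injective.ne_iff]
    constructor
    · intro h
      exact conflict_ee hv hw (fun hef => h (by cases hef; rfl))
    · intro h hef
      exact (InConflict.ne h) (by cases hef; rfl)
  · exact iff_of_false (fun h => Bool.false_ne_true h) (fun h => not_conflict_ec e j h)
  · exact iff_of_false (fun h => Bool.false_ne_true h) (fun h => not_conflict_ec f i h.symm)
  · show i ≠ j ↔ _
    constructor
    · exact fun h => conflict_cc v h
    · intro h hij
      exact (InConflict.ne h) (by cases hij; rfl)

lemma chrom_K33 :
    (SimpleGraph.completeGraph (Fin 3) ⊕g SimpleGraph.completeGraph (Fin 3)).chromaticNumber = 3 := by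
  apply le_antisymm
  · rw [show (3 : ℕ∞) = ((3 : ℕ) : ℕ∞) from rfl, SimpleGraph.chromaticNumber_le_iff_colorable]
    refine ⟨SimpleGraph.Coloring.mk (Sum.elim id id) ?_⟩
    rintro (a | a) (b | b) h <;> simpa using h
  · have h := SimpleGraph.chromaticNumber_mono_of_hom
      (SimpleGraph.Embedding.sumInl (G := SimpleGraph.completeGraph (Fin 3)) (H := SimpleGraph.completeGraph (Fin 3))).toHom
    rw [show SimpleGraph.completeGraph (Fin 3) = (⊤ : SimpleGraph (Fin 3)) from rfl,
      SimpleGraph.chromaticNumber_top] at h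
    simpa using h

lemma chrom_of_iso {W X : Type*} {G : SimpleGraph W} {H : SimpleGraph X} (e : G ≃g H) :
    G.chromaticNumber = H.chromaticNumber :=
  le_antisymm (SimpleGraph.chromaticNumber_mono_of_hom e.toEmbedding.toHom)
    (SimpleGraph.chromaticNumber_mono_of_hom e.symm.toEmbedding.toHom)

end Aux

/-- For a simple cubic graph `G` and `M = M(G)`: for each vertex row `v`, the conflict graph
`G_{M,v}` is isomorphic to the disjoint union of two triangles and has chromatic number 3; for
each row `rᵢ`, the conflict graph has a single vertex and chromatic number 1; consequently
`Σ_r χ(G_{M,r}) = 3|V|+3`. -/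
theorem stmt_13 {V : Type*} [Fintype V] [DecidableEq V] (G : SimpleGraph V)
    [DecidableRel G.Adj] (hcubic : ∀ v : V, G.degree v = 3) :
    (∀ v : V, Nonempty (conflictGraph (Mcubic G) (Sum.inl v) ≃g
        (SimpleGraph.completeGraph (Fin 3) ⊕g SimpleGraph.completeGraph (Fin 3))) ∧
      (conflictGraph (Mcubic G) (Sum.inl v)).chromaticNumber = 3) ∧
    (∀ i : Fin 3,
      Nat.card {c : ↥G.edgeSet ⊕ Fin 3 // Mcubic G (Sum.inr i) c = true} = 1 ∧
      (conflictGraph (Mcubic G) (Sum.inr i)).chromaticNumber = 1) ∧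
    ∑ r : V ⊕ Fin 3, (conflictGraph (Mcubic G) r).chromaticNumber =
      (3 * Fintype.card V + 3 : ℕ∞) := by
  have hχv : ∀ v : V, (conflictGraph (Mcubic G) (Sum.inl v)).chromaticNumber = 3 := by
    intro v
    obtain ⟨e⟩ := iso_exists hcubic v
    rw [chrom_of_iso e, chrom_K33]
  have hrow : ∀ (i : Fin 3) (c : {c : ↥G.edgeSet ⊕ Fin 3 // Mcubic G (Sum.inr i) c = true}),
      c = ⟨Sum.inr i, by simp [Mcubic]⟩ := by
    rintro i ⟨(e | j), h⟩
    · simp [Mcubic] at h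
    · simp only [Mcubic, decide_eq_true_eq] at h
      subst h
      rfl
  have hsub : ∀ i : Fin 3, Subsingleton {c : ↥G.edgeSet ⊕ Fin 3 // Mcubic G (Sum.inr i) c = true} :=
    fun i => ⟨fun a b => (hrow i a).trans (hrow i b).symm⟩
  have hone : ∀ i : Fin 3,
      Nat.card {c : ↥G.edgeSet ⊕ Fin 3 // Mcubic G (Sum.inr i) c = true} = 1 := by
    intro i
    have : Unique {c : ↥G.edgeSet ⊕ Fin 3 // Mcubic G (Sum.inr i) c = true} :=
      ⟨⟨⟨Sum.inr i, by simp [Mcubic]⟩⟩, hrow i⟩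
    exact Nat.card_unique
  have hχr : ∀ i : Fin 3, (conflictGraph (Mcubic G) (Sum.inr i)).chromaticNumber = 1 := by
    intro i
    have hs := hsub i
    have hn : Nonempty {c : ↥G.edgeSet ⊕ Fin 3 // Mcubic G (Sum.inr i) c = true} :=
      ⟨⟨Sum.inr i, by simp [Mcubic]⟩⟩
    have hcol : (conflictGraph (Mcubic G) (Sum.inr i)).Colorable 1 :=
      ⟨SimpleGraph.Coloring.mk (fun _ => 0)
        (fun {a b} hab => absurd (Subsingleton.elim a b) hab.ne)⟩
    refine le_antisymm ((conflictGraph (Mcubic G) (Sum.inr i)).chromaticNumber_le_one_of_subsingleton) ?_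
    exact ENat.one_le_iff_ne_zero.mpr (pos_iff_ne_zero.mp (SimpleGraph.chromaticNumber_pos hcol))
  refine ⟨fun v => ⟨iso_exists hcubic v, hχv v⟩, fun i => ⟨hone i, hχr i⟩, ?_⟩
  rw [Fintype.sum_sum_type]
  simp only [hχv, hχr, Finset.sum_const, Finset.card_univ, Fintype.card_fin, nsmul_eq_mul,
    mul_one]
  push_cast
  ring

end MPP
end

section
/- Let G = (V,E) be a simple cubic graph whose edge set is partitioned into three matchings E = E_1 ∪ E_2 ∪ E_3, and let M = M(G) be the (|V|+3)×(|E|+3) binary matrix associated with G. Define M' by keeping the three rows of M indexed by r_1,r_2,r_3 unchanged and replacing each row indexed by a vertex v ∈ V (with incident edges e_1,e_2,e_3 labeled so that e_i ∈ E_i) by three rows v^1,v^2,v^3, where M'_{v^i,c} = 1 if and only if c = e_i or c = c_i. Then M' is a conflict-free row split of M with 3|V|+3 rows; in particular γ̄(M(G)) ≤ 3|V|+3. -/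
namespace MPP

/-- The split matrix built from a proper 3-edge-coloring: rows `r₁,r₂,r₃` of `M(G)` are kept,
and each vertex row `v` is replaced by rows `v¹,v²,v³` with `M'_{vⁱ,c} = 1` iff `c = εᵥᵢ`
(the edge at `v` of color `i`) or `c = cᵢ`. -/
def splitCubic {V : Type*} [DecidableEq V] (G : SimpleGraph V)
    (ε : V → Fin 3 → ↥G.edgeSet) :
    ((V × Fin 3) ⊕ Fin 3) → (↥G.edgeSet ⊕ Fin 3) → Bool
  | Sum.inl (v, i), Sum.inl e => decide (e = ε v i)
  | Sum.inl (_, i), Sum.inr j => decide (i = j)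
  | Sum.inr i, c => Mcubic G (Sum.inr i) c

/-- If the edge set of a simple cubic graph `G` is partitioned into three matchings
`E 0, E 1, E 2`, with `ε v i` the edge of `E i` incident with `v`, then the matrix `splitCubic`
is a conflict-free row split of `M(G)` with `3|V|+3` rows; in particular
`γ̄(M(G)) ≤ 3|V|+3`. -/
theorem stmt_14 {V : Type*} [Fintype V] [DecidableEq V] (G : SimpleGraph V)
    [DecidableRel G.Adj] (hcubic : ∀ v : V, G.degree v = 3)
    (E : Fin 3 → Set (Sym2 V))
    (hcover : E 0 ∪ E 1 ∪ E 2 = G.edgeSet)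
    (hdisj : ∀ i j : Fin 3, i ≠ j → Disjoint (E i) (E j))
    (hmatch : ∀ i : Fin 3, IsMatchingSet (E i))
    (ε : V → Fin 3 → ↥G.edgeSet)
    (hε : ∀ (v : V) (i : Fin 3), v ∈ (ε v i : Sym2 V) ∧ (ε v i : Sym2 V) ∈ E i) :
    ConflictFree (splitCubic G ε) ∧
    IsRowSplit (Mcubic G) (splitCubic G ε) (Sum.map Prod.fst id) ∧
    Nat.card ((V × Fin 3) ⊕ Fin 3) = 3 * Fintype.card V + 3 ∧
    gammaBar (Mcubic G) ≤ 3 * Fintype.card V + 3 := by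
  classical
  -- two edges with the same color containing a common vertex must be equal
  have hcol : ∀ (v : V) (k : Fin 3) (w : V) (l : Fin 3), ε v k = ε w l → k = l := by
    intro v k w l h
    by_contra hne
    have h1 := (hε v k).2
    have h2 := (hε w l).2
    rw [h] at h1
    exact Set.disjoint_left.mp (hdisj k l hne) h1 h2
  -- conflict for (edge column, color column) is impossible
  have hec : ∀ (e : ↥G.edgeSet) (c : Fin 3),
      ¬ InConflict (splitCubic G ε) (Sum.inl e) (Sum.inr c) := by
    rintro e c ⟨r, r', r'', h1, h2, h3, h4, h5, h6⟩
    -- r has a 1 in the edge column, so r = (v,k) with e = ε v k and k = c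
    match r with
    | Sum.inl (v, k) =>
      have he : e = ε v k := by simpa [splitCubic] using h1
      have hk : k = c := by simpa [splitCubic] using h2
      -- r'' has a 1 in the edge column and 0 in column c
      match r'' with
      | Sum.inl (w, l) =>
        have he' : e = ε w l := by simpa [splitCubic] using h5
        have hl : ¬ l = c := by simpa [splitCubic] using h6
        exact hl (hk ▸ (hcol v k w l (he ▸ he')).symm)
      | Sum.inr m => simp [splitCubic, Mcubic] at h5
    | Sum.inr m => simp [splitCubic, Mcubic] at h1
  have hCF : ConflictFree (splitCubic G ε) := by
    rintro i j hc
    match i, j with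
    | Sum.inl e, Sum.inl f =>
      obtain ⟨r, r', r'', h1, h2, h3, h4, h5, h6⟩ := hc
      match r with
      | Sum.inl (v, k) =>
        have he : e = ε v k := by simpa [splitCubic] using h1
        have hf : f = ε v k := by simpa [splitCubic] using h2
        subst he; subst hf
        rw [h3] at h4; exact Bool.false_ne_true h4
      | Sum.inr m => simp [splitCubic, Mcubic] at h1
    | Sum.inl e, Sum.inr c => exact hec e c hc
    | Sum.inr c, Sum.inl e => exact hec e c hc.symm
    | Sum.inr c, Sum.inr d =>
      obtain ⟨r, r', r'', h1, h2, h3, h4, h5, h6⟩ := hc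
      have hcd : c = d := by
        match r with
        | Sum.inl (v, k) =>
          have h1' : k = c := by simpa [splitCubic] using h1
          have h2' : k = d := by simpa [splitCubic] using h2
          rw [← h1', h2']
        | Sum.inr m =>
          have h1' : m = c := by simpa [splitCubic, Mcubic] using h1
          have h2' : m = d := by simpa [splitCubic, Mcubic] using h2
          rw [← h1', h2']
      subst hcd
      rw [h3] at h4; exact Bool.false_ne_true h4
  have hRS : IsRowSplit (Mcubic G) (splitCubic G ε) (Sum.map Prod.fst id) := by
    rintro i j
    match i, j with
    | Sum.inl v, Sum.inl e =>
      constructor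
      · intro h
        have hv : v ∈ (e : Sym2 V) := by simpa [Mcubic] using h
        have hmem : (e : Sym2 V) ∈ E 0 ∪ E 1 ∪ E 2 := by rw [hcover]; exact e.2
        have : ∃ m : Fin 3, (e : Sym2 V) ∈ E m := by
          rcases hmem with (h' | h') | h'
          · exact ⟨0, h'⟩
          · exact ⟨1, h'⟩
          · exact ⟨2, h'⟩
        obtain ⟨m, hm⟩ := this
        have heq : e = ε v m := by
          by_contra hne
          have hne' : (e : Sym2 V) ≠ (ε v m : Sym2 V) := fun h'' =>
            hne (Subtype.ext h'')
          exact hmatch m _ hm _ (hε v m).2 hne' v ⟨hv, (hε v m).1⟩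
        exact ⟨Sum.inl (v, m), rfl, by simp [splitCubic, heq]⟩
      · rintro ⟨k, hk, hk'⟩
        match k with
        | Sum.inl (w, m) =>
          have hw : w = v := by simpa using hk
          subst hw
          have he : e = ε w m := by simpa [splitCubic] using hk'
          have : w ∈ (e : Sym2 V) := he ▸ (hε w m).1
          simpa [Mcubic] using this
        | Sum.inr m => simp at hk
    | Sum.inl v, Sum.inr c =>
      constructor
      · intro _
        exact ⟨Sum.inl (v, c), rfl, by simp [splitCubic]⟩
      · intro _; simp [Mcubic]
    | Sum.inr m, j =>
      constructor
      · intro h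
        exact ⟨Sum.inr m, rfl, by simpa [splitCubic] using h⟩
      · rintro ⟨k, hk, hk'⟩
        match k with
        | Sum.inl (w, l) => simp at hk
        | Sum.inr l =>
          have : l = m := by simpa using hk
          subst this
          simpa [splitCubic] using hk'
  have hcard : Nat.card ((V × Fin 3) ⊕ Fin 3) = 3 * Fintype.card V + 3 := by
    simp [Nat.card_eq_fintype_card]
    ring
  refine ⟨hCF, hRS, hcard, ?_⟩
  have hceq : Fintype.card ((V × Fin 3) ⊕ Fin 3) = 3 * Fintype.card V + 3 := by
    simp; ring
  let eqv := Fintype.equivFinOfCardEq hceq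
  refine Nat.sInf_le ?_
  refine ⟨fun k => splitCubic G ε (eqv.symm k),
    fun k => Sum.map Prod.fst id (eqv.symm k), ?_, ?_⟩
  · intro i j
    rw [hRS i j]
    constructor
    · rintro ⟨k, hk, hk'⟩
      exact ⟨eqv k, by simpa using hk, by simpa using hk'⟩
    · rintro ⟨k, hk, hk'⟩
      exact ⟨eqv.symm k, hk, hk'⟩
  · rintro i j ⟨r, r', r'', h1, h2, h3, h4, h5, h6⟩
    exact hCF i j ⟨eqv.symm r, eqv.symm r', eqv.symm r'', h1, h2, h3, h4, h5, h6⟩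

end MPP
end

section
/- Let G = (V,E) be a simple cubic graph and let M̄(G) be the (|V|+3)×(|E|+6) binary matrix associated with G. Then G is 3-edge-colorable if and only if η̄(M̄(G)) ≤ |E|+3. -/
namespace MPP

/-- The `(|V|+3) × (|E|+6)` binary matrix `M̄(G)`, with rows indexed by `V ∪ {r₁,r₂,r₃}` and
columns indexed by `E ∪ {c₁,c₂,c₃} ∪ {d₁,d₂,d₃}`. -/
def McubicBar {V : Type*} [DecidableEq V] (G : SimpleGraph V) :
    (V ⊕ Fin 3) → (↥G.edgeSet ⊕ Fin 3 ⊕ Fin 3) → Bool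
  | Sum.inl v, Sum.inl e => decide (v ∈ (e : Sym2 V))
  | Sum.inl _, Sum.inr (Sum.inl _) => true
  | Sum.inl _, Sum.inr (Sum.inr _) => false
  | Sum.inr _, Sum.inl _ => false
  | Sum.inr i, Sum.inr (Sum.inl j) => decide (i = j)
  | Sum.inr i, Sum.inr (Sum.inr j) => decide (i = j)

end MPP

namespace MPP

open Sum Function

section Helpers

variable {α β α' ι : Type*}

/-- Transport a conflict-free row split along an equivalence of row index types,
recording membership in the defining set of `etaBar`. -/
lemma mem_etaBar_set [Fintype ι] (M : α → β → Bool) (Row : ι → β → Bool) (F : ι → α)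
    (hs : IsRowSplit M Row F) (hcf : ConflictFree Row) :
    Nat.card (Set.range Row) ∈ {d : ℕ | ∃ (k : ℕ) (M' : Fin k → β → Bool) (f : Fin k → α),
      IsRowSplit M M' f ∧ ConflictFree M' ∧ Nat.card (Set.range M') = d} := by
  classical
  set e := (Fintype.equivFin ι).symm with he
  refine ⟨Fintype.card ι, Row ∘ e, F ∘ e, ?_, ?_, ?_⟩
  · intro i j
    rw [hs i j]
    constructor
    · rintro ⟨k, hk, hk'⟩
      exact ⟨e.symm k, by simpa using hk, by simpa using hk'⟩
    · rintro ⟨k, hk, hk'⟩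
      exact ⟨e k, hk, hk'⟩
  · intro i j hcon
    obtain ⟨r, r', r'', h1, h2, h3, h4, h5, h6⟩ := hcon
    exact hcf i j ⟨e r, e r', e r'', h1, h2, h3, h4, h5, h6⟩
  · rw [Set.range_comp, Equiv.range_eq_univ, Set.image_univ]

/-- The trivial conflict-free row split (one row per `1`-entry). -/
lemma etaBar_set_nonempty [Fintype α] [Fintype β] [DecidableEq β] (M : α → β → Bool) :
    Set.Nonempty {d : ℕ | ∃ (k : ℕ) (M' : Fin k → β → Bool) (f : Fin k → α),
      IsRowSplit M M' f ∧ ConflictFree M' ∧ Nat.card (Set.range M') = d} := by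
  classical
  set Row : α × β → β → Bool := fun p j => decide (p.2 = j) && M p.1 p.2 with hRow
  have hs : IsRowSplit M Row Prod.fst := by
    intro i j
    constructor
    · intro h
      exact ⟨(i, j), rfl, by simp [hRow, h]⟩
    · rintro ⟨⟨a, b⟩, rfl, hk⟩
      simp only [hRow, Bool.and_eq_true, decide_eq_true_eq] at hk
      obtain ⟨rfl, h⟩ := hk
      exact h
  have hcf : ConflictFree Row := by
    intro i j hcon
    have hne := InConflict.ne hcon
    obtain ⟨r, _, _, h1, h2, _⟩ := hcon
    simp only [hRow, Bool.and_eq_true, decide_eq_true_eq] at h1 h2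
    exact hne (h1.1.symm.trans h2.1)
  exact ⟨_, mem_etaBar_set M Row Prod.fst hs hcf⟩

lemma sym2_exists_mem (e : Sym2 α) : ∃ v, v ∈ e := by
  induction e using Sym2.ind with
  | _ a b => exact ⟨a, Sym2.mem_mk_left a b⟩

lemma sym2_exists_notmem {e e' : Sym2 α} (hd : ¬ e'.IsDiag) (hne : e ≠ e') :
    ∃ w, w ∈ e' ∧ w ∉ e := by
  induction e' using Sym2.ind with
  | _ a b =>
    by_cases ha : a ∈ e
    · by_cases hb : b ∈ e
      · exfalso
        apply hne
        induction e using Sym2.ind with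
        | _ x y =>
          have hab : a ≠ b := by simpa using hd
          rw [Sym2.mem_iff] at ha hb
          rcases ha with rfl | rfl <;> rcases hb with rfl | rfl <;>
            first
              | rfl
              | (exact absurd rfl hab)
              | (exact Sym2.eq_swap)
      · exact ⟨b, Sym2.mem_mk_right a b, hb⟩
    · exact ⟨a, Sym2.mem_mk_left a b, ha⟩

end Helpers

section Cubic

variable {V : Type*} [Fintype V] [DecidableEq V] {G : SimpleGraph V} [DecidableRel G.Adj]

lemma card_incident (hcubic : ∀ v : V, G.degree v = 3) (v : V) :
    Nat.card {e : ↥G.edgeSet // v ∈ e.1} = 3 := by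
  classical
  have e1 : {e : ↥G.edgeSet // v ∈ e.1} ≃ ↥(G.incidenceSet v) :=
    { toFun := fun e => ⟨e.1.1, e.1.2, e.2⟩
      invFun := fun e => ⟨⟨e.1, e.2.1⟩, e.2.2⟩
      left_inv := fun e => rfl
      right_inv := fun e => rfl }
  rw [Nat.card_congr e1, Nat.card_eq_fintype_card, ← Set.toFinset_card]
  have : (G.incidenceSet v).toFinset = G.incidenceFinset v := by
    simp [SimpleGraph.incidenceFinset]
  rw [this, SimpleGraph.card_incidenceFinset_eq_degree, hcubic]


def Rrow (G : SimpleGraph V) [DecidableRel G.Adj] (col : ↥G.edgeSet → Fin 3)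
    (e : ↥G.edgeSet) : (↥G.edgeSet ⊕ Fin 3 ⊕ Fin 3) → Bool
  | inl e' => decide (e' = e)
  | inr (inl j) => decide (col e = j)
  | inr (inr _) => false

def Drow (G : SimpleGraph V) [DecidableRel G.Adj] (i : Fin 3) :
    (↥G.edgeSet ⊕ Fin 3 ⊕ Fin 3) → Bool
  | inl _ => false
  | inr (inl j) => decide (i = j)
  | inr (inr j) => decide (i = j)

def fwdRow (G : SimpleGraph V) [DecidableRel G.Adj] (col : ↥G.edgeSet → Fin 3)
    (g : V → Fin 3 → ↥G.edgeSet) : (V × Fin 3) ⊕ Fin 3 → (↥G.edgeSet ⊕ Fin 3 ⊕ Fin 3) → Bool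
  | inl p => Rrow G col (g p.1 p.2)
  | inr i => Drow G i

def fwdF (G : SimpleGraph V) [DecidableRel G.Adj] : (V × Fin 3) ⊕ Fin 3 → V ⊕ Fin 3
  | inl p => inl p.1
  | inr i => inr i

lemma fwdRow_split (col : ↥G.edgeSet → Fin 3) (g : V → Fin 3 → ↥G.edgeSet)
    (hg1 : ∀ v t, v ∈ (g v t).1) (hg2 : ∀ v t, col (g v t) = t)
    (hg3 : ∀ (v : V) (e : ↥G.edgeSet), v ∈ e.1 → g v (col e) = e) :
    IsRowSplit (McubicBar G) (fwdRow G col g) (fwdF G) := by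
  rintro (v | a) (e | j | j)
  · show decide (v ∈ e.1) = true ↔ _
    simp only [decide_eq_true_eq]
    constructor
    · intro hv
      refine ⟨inl (v, col e), rfl, ?_⟩
      show Rrow G col (g v (col e)) (inl e) = true
      rw [hg3 v e hv]
      simp [Rrow]
    · rintro ⟨(p | b), hx, hx'⟩
      · obtain ⟨rfl⟩ : p.1 = v := by simpa [fwdF] using hx
        have : e = g p.1 p.2 := by simpa [fwdRow, Rrow] using hx'
        rw [this]
        exact hg1 p.1 p.2
      · simp [fwdF] at hx
  · show true = true ↔ _
    simp only [true_iff]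
    refine ⟨inl (v, j), rfl, ?_⟩
    show Rrow G col (g v j) (inr (inl j)) = true
    simp [Rrow, hg2]
  · show false = true ↔ _
    simp only [Bool.false_eq_true, false_iff]
    rintro ⟨(p | b), hx, hx'⟩
    · simp [fwdRow, Rrow] at hx'
    · simp [fwdF] at hx
  · show false = true ↔ _
    simp only [Bool.false_eq_true, false_iff]
    rintro ⟨(p | b), hx, hx'⟩
    · simp [fwdF] at hx
    · simp [fwdRow, Drow] at hx'
  · show decide (a = j) = true ↔ _
    simp only [decide_eq_true_eq]
    constructor
    · rintro rfl
      exact ⟨inr a, rfl, by simp [fwdRow, Drow]⟩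
    · rintro ⟨(p | b), hx, hx'⟩
      · simp [fwdF] at hx
      · obtain rfl : b = a := by simpa [fwdF] using hx
        simpa [fwdRow, Drow] using hx'
  · show decide (a = j) = true ↔ _
    simp only [decide_eq_true_eq]
    constructor
    · rintro rfl
      exact ⟨inr a, rfl, by simp [fwdRow, Drow]⟩
    · rintro ⟨(p | b), hx, hx'⟩
      · simp [fwdF] at hx
      · obtain rfl : b = a := by simpa [fwdF] using hx
        simpa [fwdRow, Drow] using hx'

lemma fwdRow_cf (col : ↥G.edgeSet → Fin 3) (g : V → Fin 3 → ↥G.edgeSet) :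
    ConflictFree (fwdRow G col g) := by
  have hclass : ∀ x, (∃ e, fwdRow G col g x = Rrow G col e) ∨
      (∃ a, fwdRow G col g x = Drow G a) := by
    rintro (p | a)
    · exact Or.inl ⟨g p.1 p.2, rfl⟩
    · exact Or.inr ⟨a, rfl⟩
  have edge_one : ∀ x e, fwdRow G col g x (inl e) = true → fwdRow G col g x = Rrow G col e := by
    intro x e hx
    rcases hclass x with ⟨e0, h0⟩ | ⟨a, h0⟩
    · rw [h0] at hx ⊢
      have : e = e0 := by simpa [Rrow] using hx
      rw [this]
    · rw [h0] at hx
      simp [Drow] at hx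
  have d_one : ∀ x j, fwdRow G col g x (inr (inr j)) = true → fwdRow G col g x = Drow G j := by
    intro x j hx
    rcases hclass x with ⟨e0, h0⟩ | ⟨a, h0⟩
    · rw [h0] at hx
      simp [Rrow] at hx
    · rw [h0] at hx ⊢
      have : a = j := by simpa [Drow] using hx
      rw [this]
  have lee : ∀ e e', ¬ InConflict (fwdRow G col g) (inl e) (inl e') := by
    rintro e e' ⟨r, r', r'', h1, h2, h3, h4, h5, h6⟩
    rw [edge_one r e h1] at h2
    obtain rfl : e' = e := by simpa [Rrow] using h2
    rw [h3] at h4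
    exact Bool.false_ne_true h4
  have lec : ∀ e jj, ¬ InConflict (fwdRow G col g) (inl e) (inr (inl jj)) := by
    rintro e jj ⟨r, r', r'', h1, h2, h3, h4, h5, h6⟩
    rw [edge_one r e h1] at h2
    have hc : col e = jj := by simpa [Rrow] using h2
    rw [edge_one r'' e h5] at h6
    simp [Rrow, hc] at h6
  have led : ∀ e jj, ¬ InConflict (fwdRow G col g) (inl e) (inr (inr jj)) := by
    rintro e jj ⟨r, r', r'', h1, h2, h3, h4, h5, h6⟩
    rw [edge_one r e h1] at h2
    simp [Rrow] at h2
  have lcc : ∀ i' j', ¬ InConflict (fwdRow G col g) (inr (inl i')) (inr (inl j')) := by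
    rintro i' j' ⟨r, r', r'', h1, h2, h3, h4, h5, h6⟩
    have hij : i' = j' := by
      rcases hclass r with ⟨e0, h0⟩ | ⟨a, h0⟩ <;> rw [h0] at h1 h2
      · have a1 : col e0 = i' := by simpa [Rrow] using h1
        have a2 : col e0 = j' := by simpa [Rrow] using h2
        rw [← a1, a2]
      · have a1 : a = i' := by simpa [Drow] using h1
        have a2 : a = j' := by simpa [Drow] using h2
        rw [← a1, a2]
    subst hij
    rw [h3] at h4
    exact Bool.false_ne_true h4
  have lcd : ∀ i' j', ¬ InConflict (fwdRow G col g) (inr (inl i')) (inr (inr j')) := by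
    rintro i' j' ⟨r, r', r'', h1, h2, h3, h4, h5, h6⟩
    rw [d_one r j' h2] at h1
    have hji : j' = i' := by simpa [Drow] using h1
    subst hji
    rw [d_one r' _ h4] at h3
    simp [Drow] at h3
  have ldd : ∀ i' j', ¬ InConflict (fwdRow G col g) (inr (inr i')) (inr (inr j')) := by
    rintro i' j' ⟨r, r', r'', h1, h2, h3, h4, h5, h6⟩
    rw [d_one r i' h1] at h2
    obtain rfl : i' = j' := by simpa [Drow] using h2
    rw [h3] at h4
    exact Bool.false_ne_true h4
  rintro (e | ci | di) (e' | cj | dj) hcon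
  · exact lee e e' hcon
  · exact lec e cj hcon
  · exact led e dj hcon
  · exact lec e' ci hcon.symm
  · exact lcc ci cj hcon
  · exact lcd ci dj hcon
  · exact led e' di hcon.symm
  · exact lcd cj di hcon.symm
  · exact ldd di dj hcon

lemma fwdRow_card (col : ↥G.edgeSet → Fin 3) (g : V → Fin 3 → ↥G.edgeSet) :
    Nat.card (Set.range (fwdRow G col g)) ≤ Nat.card ↥G.edgeSet + 3 := by
  classical
  have hsub : Set.range (fwdRow G col g) ⊆
      Set.range (Sum.elim (Rrow G col) (Drow G)) := by
    rintro _ ⟨(p | a), rfl⟩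
    · exact ⟨inl (g p.1 p.2), rfl⟩
    · exact ⟨inr a, rfl⟩
  have h1 : Nat.card (Set.range (fwdRow G col g)) ≤
      Nat.card (Set.range (Sum.elim (Rrow G col) (Drow G))) :=
    Nat.card_mono (Set.finite_range _) hsub
  have h2 : Nat.card (Set.range (Sum.elim (Rrow G col) (Drow G))) ≤
      Nat.card (↥G.edgeSet ⊕ Fin 3) := by
    rw [Nat.card_coe_set_eq, ← Set.image_univ]
    calc (Sum.elim (Rrow G col) (Drow G) '' Set.univ).ncard ≤ (Set.univ : Set (↥G.edgeSet ⊕ Fin 3)).ncard :=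
          Set.ncard_image_le Set.finite_univ
      _ = Nat.card (↥G.edgeSet ⊕ Fin 3) := Set.ncard_univ _
  refine le_trans h1 (le_trans h2 ?_)
  rw [Nat.card_sum]
  simp

lemma forward_dir (hcubic : ∀ v : V, G.degree v = 3) (h3 : ThreeEdgeColorable G) :
    etaBar (McubicBar G) ≤ Nat.card ↥G.edgeSet + 3 := by
  classical
  obtain ⟨E1, E2, E3, hU, d12, d13, d23, m1, m2, m3⟩ := h3
  set col : ↥G.edgeSet → Fin 3 := fun e => if e.1 ∈ E1 then 0 else if e.1 ∈ E2 then 1 else 2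
    with hcoldef
  have hmem : ∀ e : ↥G.edgeSet, (col e = 0 ∧ e.1 ∈ E1) ∨ (col e = 1 ∧ e.1 ∈ E2) ∨
      (col e = 2 ∧ e.1 ∈ E3) := by
    intro e
    have he : e.1 ∈ E1 ∪ E2 ∪ E3 := by rw [hU]; exact e.2
    by_cases h1 : e.1 ∈ E1
    · exact Or.inl ⟨by simp [hcoldef, h1], h1⟩
    · by_cases h2 : e.1 ∈ E2
      · exact Or.inr (Or.inl ⟨by simp [hcoldef, h1, h2], h2⟩)
      · have h3' : e.1 ∈ E3 := by
          rcases he with (h | h) | h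
          · exact absurd h h1
          · exact absurd h h2
          · exact h
        exact Or.inr (Or.inr ⟨by simp [hcoldef, h1, h2], h3'⟩)
  have hinj : ∀ v : V, Function.Injective
      (fun e : {e : ↥G.edgeSet // v ∈ e.1} => col e.1) := by
    intro v a b hab
    by_contra hne
    have hne' : a.1.1 ≠ b.1.1 := fun h => hne (Subtype.ext (Subtype.ext h))
    have hmatch : ∀ (E : Set (Sym2 V)), IsMatchingSet E → a.1.1 ∈ E → b.1.1 ∈ E → False := by
      intro E hE ha hb
      exact hE a.1.1 ha b.1.1 hb hne' v ⟨a.2, b.2⟩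
    simp only at hab
    rcases hmem a.1 with ⟨ca, ha⟩ | ⟨ca, ha⟩ | ⟨ca, ha⟩ <;>
      rcases hmem b.1 with ⟨cb, hb⟩ | ⟨cb, hb⟩ | ⟨cb, hb⟩ <;>
      rw [ca, cb] at hab <;>
      first
        | exact hmatch _ m1 ha hb
        | exact hmatch _ m2 ha hb
        | exact hmatch _ m3 ha hb
        | exact absurd hab (by decide)
  have hbij : ∀ v : V, Function.Bijective
      (fun e : {e : ↥G.edgeSet // v ∈ e.1} => col e.1) := by
    intro v
    rw [Nat.bijective_iff_injective_and_card]
    exact ⟨hinj v, by rw [card_incident hcubic v]; simp⟩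
  let eqv : ∀ v : V, {e : ↥G.edgeSet // v ∈ e.1} ≃ Fin 3 := fun v => Equiv.ofBijective _ (hbij v)
  let g : V → Fin 3 → ↥G.edgeSet := fun v t => ((eqv v).symm t).1
  have hg1 : ∀ v t, v ∈ (g v t).1 := fun v t => ((eqv v).symm t).2
  have hg2 : ∀ v t, col (g v t) = t := fun v t => (eqv v).apply_symm_apply t
  have hg3 : ∀ (v : V) (e : ↥G.edgeSet), v ∈ e.1 → g v (col e) = e := fun v e hv =>
    congrArg Subtype.val ((eqv v).symm_apply_apply ⟨e, hv⟩)
  exact le_trans (Nat.sInf_le (mem_etaBar_set _ _ _ (fwdRow_split col g hg1 hg2 hg3)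
    (fwdRow_cf col g))) (fwdRow_card col g)


lemma backward_dir (hcubic : ∀ v : V, G.degree v = 3)
    (hle : etaBar (McubicBar G) ≤ Nat.card ↥G.edgeSet + 3) : ThreeEdgeColorable G := by
  classical
  have hne := etaBar_set_nonempty (McubicBar G)
  have hmem := Nat.sInf_mem hne
  obtain ⟨k, M', f, hsplit, hcf, hcard⟩ := hmem
  have hle' : Nat.card (Set.range M') ≤ Nat.card ↥G.edgeSet + 3 := hcard.trans_le hle
  have hA : ∀ (x : Fin k) c, M' x c = true → McubicBar G (f x) c = true :=
    fun x c h => (hsplit (f x) c).mpr ⟨x, rfl, h⟩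
  have L3 : ∀ (x : Fin k) (i : Fin 3), M' x (inr (inr i)) = true → f x = inr i := by
    intro x i h
    have h2 := hA x _ h
    rcases hf : f x with v | a
    · rw [hf] at h2
      simp [McubicBar] at h2
    · rw [hf] at h2
      have : a = i := by simpa [McubicBar] using h2
      rw [this]
  have L1 : ∀ (x : Fin k) (e e' : ↥G.edgeSet),
      M' x (inl e) = true → M' x (inl e') = true → e = e' := by
    intro x e e' he he'
    by_contra hne'
    have hw : ∀ (a b : ↥G.edgeSet), a ≠ b →
        ∃ y, M' y (inl a) = false ∧ M' y (inl b) = true := by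
      intro a b hab
      obtain ⟨w, hwb, hwa⟩ := sym2_exists_notmem (G.not_isDiag_of_mem_edgeSet b.2)
        (fun h => hab (Subtype.ext h))
      have hm : McubicBar G (inl w) (inl b) = true := by simp [McubicBar, hwb]
      obtain ⟨y, hy, hy'⟩ := (hsplit (inl w) (inl b)).mp hm
      refine ⟨y, ?_, hy'⟩
      cases hval : M' y (inl a) with
      | false => rfl
      | true =>
        exfalso
        have h2 := hA y (inl a) hval
        rw [hy] at h2
        exact hwa (by simpa [McubicBar] using h2)
    obtain ⟨y1, hy1f, hy1t⟩ := hw e e' hne'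
    obtain ⟨y2, hy2f, hy2t⟩ := hw e' e (Ne.symm hne')
    exact hcf (inl e) (inl e') ⟨x, y1, y2, he, he', hy1f, hy1t, hy2t, hy2f⟩
  have L2 : ∀ (x : Fin k) (i j : Fin 3),
      M' x (inr (inl i)) = true → M' x (inr (inl j)) = true → i = j := by
    intro x i j hi hj
    by_contra hne'
    have hw : ∀ a b : Fin 3, a ≠ b →
        ∃ y, M' y (inr (inl a)) = false ∧ M' y (inr (inl b)) = true := by
      intro a b hab
      have hm : McubicBar G (inr b) (inr (inl b)) = true := by simp [McubicBar]
      obtain ⟨y, hy, hy'⟩ := (hsplit _ _).mp hm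
      refine ⟨y, ?_, hy'⟩
      cases hval : M' y (inr (inl a)) with
      | false => rfl
      | true =>
        exfalso
        have h2 := hA y _ hval
        rw [hy] at h2
        have : b = a := by simpa [McubicBar] using h2
        exact hab this.symm
    obtain ⟨y1, hy1f, hy1t⟩ := hw i j hne'
    obtain ⟨y2, hy2f, hy2t⟩ := hw j i (Ne.symm hne')
    exact hcf _ _ ⟨x, y1, y2, hi, hj, hy1f, hy1t, hy2t, hy2f⟩
  have hrowE : ∀ e : ↥G.edgeSet, ∃ x, M' x (inl e) = true := by
    intro e
    obtain ⟨v, hv⟩ := sym2_exists_mem e.1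
    have hm : McubicBar G (inl v) (inl e) = true := by simp [McubicBar, hv]
    obtain ⟨x, _, hx⟩ := (hsplit _ _).mp hm
    exact ⟨x, hx⟩
  have hrowD : ∀ i : Fin 3, ∃ x, M' x (inr (inr i)) = true := by
    intro i
    have hm : McubicBar G (inr i) (inr (inr i)) = true := by simp [McubicBar]
    obtain ⟨x, _, hx⟩ := (hsplit _ _).mp hm
    exact ⟨x, hx⟩
  let ke : ↥G.edgeSet → Fin k := fun e => (hrowE e).choose
  have hke : ∀ e, M' (ke e) (inl e) = true := fun e => (hrowE e).choose_spec
  let kd : Fin 3 → Fin k := fun i => (hrowD i).choose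
  have hkd : ∀ i, M' (kd i) (inr (inr i)) = true := fun i => (hrowD i).choose_spec
  let φ : ↥G.edgeSet ⊕ Fin 3 → ↥(Set.range M') :=
    fun x => match x with
      | inl e => ⟨M' (ke e), Set.mem_range_self _⟩
      | inr i => ⟨M' (kd i), Set.mem_range_self _⟩
  have hφinj : Function.Injective φ := by
    rintro (e | i) (e' | i') h
    · have h2 : M' (ke e) = M' (ke e') := congrArg Subtype.val h
      have h3 := hke e'
      rw [← h2] at h3
      exact congrArg inl (L1 _ _ _ (hke e) h3)
    · exfalso
      have h2 : M' (ke e) = M' (kd i') := congrArg Subtype.val h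
      have hd : M' (ke e) (inr (inr i')) = true := by rw [h2]; exact hkd i'
      have hf := L3 _ _ hd
      have h3 := hA (ke e) (inl e) (hke e)
      rw [hf] at h3
      simp [McubicBar] at h3
    · exfalso
      have h2 : M' (kd i) = M' (ke e') := congrArg Subtype.val h
      have hd : M' (ke e') (inr (inr i)) = true := by rw [← h2]; exact hkd i
      have hf := L3 _ _ hd
      have h3 := hA (ke e') (inl e') (hke e')
      rw [hf] at h3
      simp [McubicBar] at h3
    · have h2 : M' (kd i) = M' (kd i') := congrArg Subtype.val h
      have hd : M' (kd i) (inr (inr i')) = true := by rw [h2]; exact hkd i'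
      have ha := L3 _ _ hd
      have hb := L3 _ _ (hkd i)
      rw [hb] at ha
      exact congrArg inr (Sum.inr_injective ha)
  have hcardeq : Nat.card (↥G.edgeSet ⊕ Fin 3) = Nat.card ↥(Set.range M') := by
    refine le_antisymm (Nat.card_le_card_of_injective φ hφinj) ?_
    calc Nat.card ↥(Set.range M') ≤ Nat.card ↥G.edgeSet + 3 := hle'
      _ = Nat.card (↥G.edgeSet ⊕ Fin 3) := by rw [Nat.card_sum]; simp
  have hφbij : Function.Bijective φ := (Nat.bijective_iff_injective_and_card φ).mpr
    ⟨hφinj, hcardeq⟩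
  have hclass : ∀ x : Fin k, (∃ e, M' x = M' (ke e)) ∨ (∃ i, M' x = M' (kd i)) := by
    intro x
    obtain ⟨y, hy⟩ := hφbij.2 ⟨M' x, Set.mem_range_self x⟩
    rcases y with e | i
    · exact Or.inl ⟨e, (congrArg Subtype.val hy).symm⟩
    · exact Or.inr ⟨i, (congrArg Subtype.val hy).symm⟩
  have C1 : ∀ (v : V) (j : Fin 3), ∃ e : ↥G.edgeSet,
      v ∈ e.1 ∧ M' (ke e) (inr (inl j)) = true := by
    intro v j
    have hm : McubicBar G (inl v) (inr (inl j)) = true := rfl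
    obtain ⟨x, hxf, hx⟩ := (hsplit _ _).mp hm
    rcases hclass x with ⟨e, hxe⟩ | ⟨i, hxi⟩
    · refine ⟨e, ?_, by rw [← hxe]; exact hx⟩
      have h3 := hA x (inl e) (by rw [hxe]; exact hke e)
      rw [hxf] at h3
      simpa [McubicBar] using h3
    · exfalso
      have hd : M' x (inr (inr i)) = true := by rw [hxi]; exact hkd i
      have h3 := L3 _ _ hd
      rw [hxf] at h3
      simp at h3
  have hbij : ∀ v : V, Function.Bijective (fun j : Fin 3 =>
      (⟨(C1 v j).choose, (C1 v j).choose_spec.1⟩ : {e : ↥G.edgeSet // v ∈ e.1})) := by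
    intro v
    rw [Nat.bijective_iff_injective_and_card]
    constructor
    · intro j j' hjj
      have h1 := (C1 v j).choose_spec.2
      have h2 := (C1 v j').choose_spec.2
      have heq : (C1 v j).choose = (C1 v j').choose := congrArg Subtype.val hjj
      rw [heq] at h1
      exact L2 _ _ _ h1 h2
    · rw [card_incident hcubic v]
      simp
  have colEx : ∀ e : ↥G.edgeSet, ∃ j, M' (ke e) (inr (inl j)) = true := by
    intro e
    obtain ⟨v, hv⟩ := sym2_exists_mem e.1
    obtain ⟨j, hj⟩ := (hbij v).2 ⟨e, hv⟩
    have h1 := (C1 v j).choose_spec.2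
    have he : (C1 v j).choose = e := congrArg Subtype.val hj
    rw [he] at h1
    exact ⟨j, h1⟩
  let col : ↥G.edgeSet → Fin 3 := fun e => (colEx e).choose
  have hcol : ∀ e, M' (ke e) (inr (inl (col e))) = true := fun e => (colEx e).choose_spec
  have hcolu : ∀ e j, M' (ke e) (inr (inl j)) = true → col e = j :=
    fun e j h => L2 _ _ _ (hcol e) h
  have hproper : ∀ (v : V) (e e' : ↥G.edgeSet), v ∈ e.1 → v ∈ e'.1 →
      col e = col e' → e = e' := by
    intro v e e' hv hv' hcc
    obtain ⟨j, hj⟩ := (hbij v).2 ⟨e, hv⟩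
    obtain ⟨j', hj'⟩ := (hbij v).2 ⟨e', hv'⟩
    have he : (C1 v j).choose = e := congrArg Subtype.val hj
    have he' : (C1 v j').choose = e' := congrArg Subtype.val hj'
    have hce : col e = j := hcolu e j (by rw [← he]; exact (C1 v j).choose_spec.2)
    have hce' : col e' = j' := hcolu e' j' (by rw [← he']; exact (C1 v j').choose_spec.2)
    have hjj : j = j' := by rw [← hce, ← hce', hcc]
    rw [← he, ← he', hjj]
  have hdisj : ∀ jv jv' : Fin 3, jv ≠ jv' →
      Disjoint {s : Sym2 V | ∃ h : s ∈ G.edgeSet, col ⟨s, h⟩ = jv}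
        {s : Sym2 V | ∃ h : s ∈ G.edgeSet, col ⟨s, h⟩ = jv'} := by
    intro jv jv' hne'
    rw [Set.disjoint_left]
    rintro s ⟨h, hc⟩ ⟨h', hc'⟩
    exact hne' (hc.symm.trans hc')
  have hmatch : ∀ jv : Fin 3,
      IsMatchingSet {s : Sym2 V | ∃ h : s ∈ G.edgeSet, col ⟨s, h⟩ = jv} := by
    rintro jv e ⟨he, hce⟩ f' ⟨hf', hcf'⟩ hne' v ⟨hv1, hv2⟩
    exact hne' (congrArg Subtype.val
      (hproper v ⟨e, he⟩ ⟨f', hf'⟩ hv1 hv2 (hce.trans hcf'.symm)))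
  refine ⟨{s | ∃ h : s ∈ G.edgeSet, col ⟨s, h⟩ = 0},
    {s | ∃ h : s ∈ G.edgeSet, col ⟨s, h⟩ = 1},
    {s | ∃ h : s ∈ G.edgeSet, col ⟨s, h⟩ = 2}, ?_,
    hdisj 0 1 (by decide), hdisj 0 2 (by decide), hdisj 1 2 (by decide),
    hmatch 0, hmatch 1, hmatch 2⟩
  ext s
  simp only [Set.mem_union, Set.mem_setOf_eq]
  constructor
  · rintro ((⟨h, _⟩ | ⟨h, _⟩) | ⟨h, _⟩) <;> exact h
  · intro hs
    have h3 : ∀ t : Fin 3, t = 0 ∨ t = 1 ∨ t = 2 := by decide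
    rcases h3 (col ⟨s, hs⟩) with h | h | h
    · exact Or.inl (Or.inl ⟨hs, h⟩)
    · exact Or.inl (Or.inr ⟨hs, h⟩)
    · exact Or.inr ⟨hs, h⟩

end Cubic

end MPP


namespace MPP

/-- A simple cubic graph `G` is 3-edge-colorable iff `η̄(M̄(G)) ≤ |E|+3`. -/
theorem stmt_16 {V : Type*} [Fintype V] [DecidableEq V] (G : SimpleGraph V)
    [DecidableRel G.Adj] (hcubic : ∀ v : V, G.degree v = 3) :
    ThreeEdgeColorable G ↔ etaBar (McubicBar G) ≤ Nat.card ↥G.edgeSet + 3 :=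
  ⟨forward_dir hcubic, backward_dir hcubic⟩

end MPP
end

section
/- Every conflict-free binary matrix with n ≥ 1 columns has at most 2n pairwise distinct rows. -/
namespace MPP

/-- Every conflict-free binary matrix with `n ≥ 1` columns has at most `2n` pairwise
distinct rows. -/
theorem stmt_17 {m n : ℕ} (hn : 1 ≤ n) (M : Fin m → Fin n → Bool)
    (hcf : ConflictFree M) :
    Nat.card (Set.range M) ≤ 2 * n := by
  classical
  set C : Fin n → (Fin m → Bool) := fun j r => M r j with hCdef
  -- totality of containment on columns sharing a 1-row
  have htot : ∀ (r : Fin m) (j k : Fin n), M r j = true → M r k = true →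
      Contained M j k ∨ Contained M k j := by
    intro r j k hj hk
    by_contra hcon
    push_neg at hcon
    obtain ⟨h1, h2⟩ := hcon
    simp only [Contained, not_forall] at h1 h2
    obtain ⟨r'', hr''j, hr''k⟩ := h1
    obtain ⟨r', hr'k, hr'j⟩ := h2
    exact hcf j k ⟨r, r', r'', hj, hk, by simpa using hr'j, hr'k, hr''j, by simpa using hr''k⟩
  -- existence of a minimal column among columns of a nonempty-support row
  have hmin : ∀ v ∈ Set.range M, (∃ j, v j = true) →
      ∃ j, v j = true ∧ ∀ k, v k = true → Contained M j k := by
    rintro v ⟨r, rfl⟩ ⟨j0, hj0⟩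
    set w : Fin n → ℕ := fun j => (Finset.univ.filter (fun a => M a j = true)).card with hw
    obtain ⟨j, hjmem, hjmin⟩ :=
      (Finset.univ.filter (fun j => M r j = true)).exists_min_image w ⟨j0, by simp [hj0]⟩
    simp only [Finset.mem_filter, Finset.mem_univ, true_and] at hjmem
    refine ⟨j, hjmem, ?_⟩
    intro k hk
    rcases htot r j k hjmem hk with h | h
    · exact h
    · have hsub : (Finset.univ.filter (fun a => M a k = true)) ⊆
          (Finset.univ.filter (fun a => M a j = true)) := by
        intro a ha
        simp only [Finset.mem_filter, Finset.mem_univ, true_and] at *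
        exact h a ha
      have hle : w j ≤ w k := hjmin k (by simp [hk])
      have heq := Finset.eq_of_subset_of_card_le hsub hle
      intro a haj
      have : a ∈ (Finset.univ.filter (fun a => M a k = true)) := by
        rw [heq]; simp [haj]
      simpa using this
  -- the injection from rows to Option (columns)
  let g : (Set.range M) → Option (Set.range C) := fun v =>
    if h : ∃ j, v.1 j = true ∧ ∀ k, v.1 k = true → Contained M j k then
      some ⟨C h.choose, Set.mem_range_self _⟩
    else none
  have hginj : Function.Injective g := by
    rintro ⟨v1, hv1⟩ ⟨v2, hv2⟩ hgv
    simp only [g] at hgv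
    split_ifs at hgv with h1 h2 h2
    · obtain ⟨hj1, hm1⟩ := h1.choose_spec
      obtain ⟨hj2, hm2⟩ := h2.choose_spec
      have hCeq : C h1.choose = C h2.choose := by
        simpa [Subtype.ext_iff] using hgv
      obtain ⟨r1, hr1⟩ := hv1
      obtain ⟨r2, hr2⟩ := hv2
      set j1 := h1.choose
      set j2 := h2.choose
      -- cross memberships
      have hv1j2 : v1 j2 = true := by
        have : C j1 r1 = true := by rw [hCdef]; simp only; rw [hr1]; exact hj1
        rw [hCeq] at this
        rw [hCdef] at this; simp only at this; rwa [hr1] at this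
      have hv2j1 : v2 j1 = true := by
        have : C j2 r2 = true := by rw [hCdef]; simp only; rw [hr2]; exact hj2
        rw [← hCeq] at this
        rw [hCdef] at this; simp only at this; rwa [hr2] at this
      apply Subtype.ext
      funext k
      have hiff : v1 k = true ↔ v2 k = true := by
        constructor
        · intro hk
          have hcont := hm1 k hk
          have : M r2 j1 = true := by rw [hr2]; exact hv2j1
          have := hcont r2 this
          rwa [hr2] at this
        · intro hk
          have hcont := hm2 k hk
          have : M r1 j2 = true := by rw [hr1]; exact hv1j2
          have := hcont r1 this
          rwa [hr1] at this
      cases hk1 : v1 k <;> cases hk2 : v2 k <;> simp_all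
    all_goals try simp at hgv
    -- remaining: both rows are all-false
    · have hz : ∀ (v : Fin n → Bool), v ∈ Set.range M →
          ¬(∃ j, v j = true ∧ ∀ k, v k = true → Contained M j k) → ∀ j, v j = false := by
        intro v hv hne j
        by_contra hj
        exact hne (hmin v hv ⟨j, by simpa using hj⟩)
      apply Subtype.ext
      funext k
      show v1 k = v2 k
      rw [hz v1 hv1 h1 k, hz v2 hv2 h2 k]
  calc Nat.card (Set.range M) ≤ Nat.card (Option (Set.range C)) :=
        Nat.card_le_card_of_injective g hginj
    _ = Nat.card (Set.range C) + 1 := Finite.card_option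
    _ ≤ n + 1 := by
        have := Finite.card_range_le C
        simpa using Nat.add_le_add_right this 1
    _ ≤ 2 * n := by omega

end MPP
end

section
/- Let M be an m×n binary matrix with no all-zero row, and let c be a proper vertex coloring of the complement of the undirected containment graph H_M. Define a binary matrix M' with n columns as follows: for each row r of M, letting c(V(G_{M,r})) = {s_1,…,s_t} be the set of colors assigned by c to the columns j with M_{r,j}=1, add t rows r'_1,…,r'_t to M', where M'_{r'_i, j} = 1 if and only if M_{r,j} = 1 and c(j) = s_i. Then M' is a conflict-free row split of M. -/
namespace MPP

/-- The matrix built by the heuristic algorithm from a coloring `c` of the columns: for each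
row `r` of `M` and each color `s` used by `c` on the columns having a `1` in row `r`, there is
a row whose entry in column `j` is `1` iff `M_{r,j} = 1` and `c j = s`. -/
def heurMatrix {m n : ℕ} {γ : Type*} [DecidableEq γ] (M : Fin m → Fin n → Bool)
    (c : Fin n → γ) :
    (Σ r : Fin m, {s : γ // ∃ j : Fin n, M r j = true ∧ c j = s}) → Fin n → Bool :=
  fun p j => M p.1 j && decide (c j = p.2.1)

/-- If `c` is a proper coloring of the complement of the undirected containment graph `H_M`,
then the matrix built by the heuristic algorithm is a conflict-free row split of `M`. -/
theorem stmt_18 {m n : ℕ} {γ : Type*} [DecidableEq γ] (M : Fin m → Fin n → Bool)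
    (hrow : ∀ r : Fin m, ∃ j, M r j = true) (c : Fin n → γ)
    (hc : ∀ i j : Fin n, (containmentGraph M)ᶜ.Adj i j → c i ≠ c j) :
    ConflictFree (heurMatrix M c) ∧ IsRowSplit M (heurMatrix M c) (fun p => p.1) := by
  constructor
  · rintro i j ⟨p, p', p'', h1, h2, h3, h4, h5, h6⟩
    simp only [heurMatrix, Bool.and_eq_true, decide_eq_true_eq, Bool.and_eq_false_iff,
      decide_eq_false_iff_not] at h1 h2 h3 h4 h5 h6
    have hcij : c i = c j := h1.2.trans h2.2.symm
    have hij : i ≠ j := by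
      rintro rfl
      rcases h3 with h3 | h3
      · rw [h4.1] at h3; exact Bool.false_ne_true h3.symm
      · exact h3 h4.2
    have hadj : (containmentGraph M).Adj i j := by
      by_contra hna
      exact hc i j ⟨hij, hna⟩ hcij
    rcases (show i ≠ j ∧ (Contained M i j ∨ Contained M j i) from hadj).2 with hcon | hcon
    · rcases h6 with h6 | h6
      · exact absurd (hcon _ h5.1) (by rw [h6]; exact Bool.false_ne_true)
      · exact h6 (hcij ▸ h5.2)
    · rcases h3 with h3 | h3
      · exact absurd (hcon _ h4.1) (by rw [h3]; exact Bool.false_ne_true)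
      · exact h3 (hcij ▸ h4.2)
  · intro r j
    constructor
    · intro h
      exact ⟨⟨r, ⟨c j, ⟨j, h, rfl⟩⟩⟩, rfl, by simp [heurMatrix, h]⟩
    · rintro ⟨p, rfl, hp⟩
      simp only [heurMatrix, Bool.and_eq_true] at hp
      exact hp.1

end MPP
end

section
/- If G is a simple graph of minimum degree at least 2 and M ∈ {0,1}^{E(G)×V(G)} is the edge-vertex incidence matrix of G, then G is isomorphic to the conflict graph G_M of M. -/
namespace MPP

/-- The edge-vertex incidence matrix of a graph `G`: rows are edges, columns are vertices,
with `M_{e,v} = 1` iff `v` is an endpoint of `e`. -/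
def incidenceMatrixEV {V : Type*} [DecidableEq V] (G : SimpleGraph V) :
    ↥G.edgeSet → V → Bool :=
  fun e v => decide (v ∈ (e : Sym2 V))

/-- If `G` has minimum degree at least 2, then `G` is isomorphic to the conflict graph of its
edge-vertex incidence matrix. -/
theorem stmt_19 {V : Type*} [Fintype V] [DecidableEq V] (G : SimpleGraph V)
    [DecidableRel G.Adj] (hdeg : ∀ v : V, 2 ≤ G.degree v) :
    Nonempty (G ≃g conflictGraphAll (incidenceMatrixEV G)) := by
  have key : ∀ u v : V, u ≠ v → G.Adj u v →
      ∃ e : ↥G.edgeSet, incidenceMatrixEV G e v = true ∧ incidenceMatrixEV G e u = false := by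
    intro u v huv _
    have h2 := hdeg v
    have hw : ∃ w ∈ G.neighborFinset v, w ≠ u := by
      by_contra h
      push_neg at h
      have hsub : G.neighborFinset v ⊆ {u} := fun w hw => Finset.mem_singleton.mpr (h w hw)
      have := Finset.card_le_card hsub
      rw [G.card_neighborFinset_eq_degree] at this
      simp at this
      omega
    obtain ⟨w, hw, hwu⟩ := hw
    rw [SimpleGraph.mem_neighborFinset] at hw
    refine ⟨⟨s(v, w), hw⟩, ?_, ?_⟩
    · simp [incidenceMatrixEV]
    · simp only [incidenceMatrixEV, decide_eq_false_iff_not, Sym2.mem_iff]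
      rintro (rfl | rfl)
      · exact huv rfl
      · exact hwu rfl
  refine ⟨⟨Equiv.refl V, ?_⟩⟩
  intro u v
  simp only [Equiv.refl_apply]
  show InConflict (incidenceMatrixEV G) u v ↔ G.Adj u v
  constructor
  · rintro ⟨r, r', r'', h1, h2, h3, h4, h5, h6⟩
    have huv : u ≠ v := by rintro rfl; rw [h3] at h4; exact Bool.false_ne_true h4
    simp only [incidenceMatrixEV, decide_eq_true_eq] at h1 h2
    have : (r : Sym2 V) = s(u, v) := (Sym2.mem_and_mem_iff huv).mp ⟨h1, h2⟩
    have hr := r.2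
    rw [this] at hr
    exact hr
  · intro hadj
    have huv : u ≠ v := hadj.ne
    obtain ⟨e1, he1v, he1u⟩ := key u v huv hadj
    obtain ⟨e2, he2u, he2v⟩ := key v u huv.symm hadj.symm
    refine ⟨⟨s(u, v), hadj⟩, e1, e2, ?_, ?_, he1u, he1v, he2u, he2v⟩
    · simp [incidenceMatrixEV]
    · simp [incidenceMatrixEV]


end MPP
end
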